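/- arXiv:2005.05291 — 4 statements merged into one kernel-verified Lean document; each statement's English description precedes it below -/
import Mathlib

section
/- Let k ≥ 2 and let 1 ≤ j ≤ k−1 be an integer. Let H be the k-graph on a vertex set V of size n ≥ k+1 that has a subset X ⊆ V with (j−1)·n < k·|X| < (j+1)·n, and whose edges are exactly the k-element subsets S of V with |S ∩ X| ≠ j. Then H contains no tight Hamilton cycle. (This is the property of the Han–Zhao construction underlying the lower bounds on the tight Hamilton cycle thresholds, e.g. hc_{k−2}(k) ≥ 5/9.) -/
open Finset

variable {A : Type*} [DecidableEq A]

/-- The set of vertices occupying positions `i, …, i+k-1` of the walk `w`. -/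
def walkEdgeAt (k : ℕ) (w : List A) (i : ℕ) : Finset A :=
  ((w.drop i).take k).toFinset

/-- `w` is a tight walk in the `k`-graph with edge set `E`: it has at least `k`
vertices and every `k` consecutive vertices form an edge of `E`. -/
def IsTightWalk (k : ℕ) (E : Finset (Finset A)) (w : List A) : Prop :=
  k ≤ w.length ∧ ∀ i, i + k ≤ w.length → walkEdgeAt k w i ∈ E

/-- The edge `e` appears on the walk `w` (as `k` consecutive vertices). -/
def EdgeOnWalk (k : ℕ) (w : List A) (e : Finset A) : Prop :=
  ∃ i, i + k ≤ w.length ∧ walkEdgeAt k w i = e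

/-- A `k`-uniform edge set is tightly connected if any two of its edges lie on a
common tight walk all of whose edges belong to it. -/
def TightlyConnected (k : ℕ) (E : Finset (Finset A)) : Prop :=
  ∀ e₁ ∈ E, ∀ e₂ ∈ E, ∃ w : List A, IsTightWalk k E w ∧ EdgeOnWalk k w e₁ ∧ EdgeOnWalk k w e₂

/-- `w` is a closed tight walk: every cyclic interval of `k` consecutive vertices
forms an edge of `E`.  Its length is `w.length`. -/
def IsClosedTightWalk (k : ℕ) (E : Finset (Finset A)) (w : List A) : Prop :=
  k ≤ w.length ∧ ∀ i < w.length, ((w.rotate i).take k).toFinset ∈ E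

/-- A tight Hamilton cycle: a cyclic ordering of all the vertices in which every `k`
cyclically consecutive vertices form an edge. -/
def HasTightHamCycle (k : ℕ) (V : Finset A) (E : Finset (Finset A)) : Prop :=
  ∃ w : List A, w.Nodup ∧ w.toFinset = V ∧ IsClosedTightWalk k E w

/-- The `j`-th shadow: all `j`-element sets contained in some edge. -/
def shadow (j : ℕ) (E : Finset (Finset A)) : Finset (Finset A) :=
  E.biUnion fun e => e.powersetCard j

/-- The link graph of `S`: the `(k-d)`-graph whose edges are `e \ S` for edges `e ⊇ S`. -/
def link (S : Finset A) (E : Finset (Finset A)) : Finset (Finset A) :=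
  (E.filter fun e => S ⊆ e).image fun e => e \ S

/-- `E` has a fractional matching of size at least `m`. -/
def HasFracMatching (E : Finset (Finset A)) (m : ℝ) : Prop :=
  ∃ w : Finset A → ℝ,
    (∀ e ∈ E, 0 ≤ w e ∧ w e ≤ 1) ∧
    (∀ v : A, ∑ e ∈ E.filter (fun e' => v ∈ e'), w e ≤ 1) ∧
    m ≤ ∑ e ∈ E, w e

/-- `E` has a `b`-fractional matching of size at least `m` (vertex constraints on `V`). -/
def HasBFracMatching (V : Finset A) (E : Finset (Finset A)) (b : A → ℝ) (m : ℝ) : Prop :=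
  ∃ w : Finset A → ℝ,
    (∀ e ∈ E, 0 ≤ w e ∧ w e ≤ 1) ∧
    (∀ v ∈ V, ∑ e ∈ E.filter (fun e' => v ∈ e'), w e ≤ b v) ∧
    m ≤ ∑ e ∈ E, w e

/-- `γ`-robustly matchable: every vertex weighting with values in `[1-γ,1]` is realised
exactly by an edge weighting with values in `[0,1]`. -/
def RobustlyMatchable (γ : ℝ) (V : Finset A) (E : Finset (Finset A)) : Prop :=
  ∀ b : A → ℝ, (∀ v ∈ V, 1 - γ ≤ b v ∧ b v ≤ 1) →
    ∃ w : Finset A → ℝ, (∀ e ∈ E, 0 ≤ w e ∧ w e ≤ 1) ∧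
      ∀ v ∈ V, ∑ e ∈ E.filter (fun e' => v ∈ e'), w e = b v

/-- A switcher: an edge `e` with a central vertex `a` such that for every `b ∈ e`
there is `c ∉ e` with `(e ∪ {c}) \ {a}` and `(e ∪ {c}) \ {b}` both edges. -/
def HasSwitcher (C : Finset (Finset A)) : Prop :=
  ∃ e ∈ C, ∃ a ∈ e, ∀ b ∈ e, ∃ c, c ∉ e ∧
    insert c (e.erase a) ∈ C ∧ insert c (e.erase b) ∈ C

/-- An arc for the `d`-vicinity `C` of the `k`-graph with edge set `E`: a tuple of
`k+1` distinct vertices `v₁, …, v_{k+1}` with `{v₁,…,v_d} ∈ ∂_d`,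
`{v_{d+1},…,v_k} ∈ C {v₁,…,v_d}`, `{v₂,…,v_{d+1}} ∈ ∂_d` and
`{v_{d+2},…,v_{k+1}} ∈ C {v₂,…,v_{d+1}}`. -/
def HasArc (k d : ℕ) (E : Finset (Finset A)) (C : Finset A → Finset (Finset A)) : Prop :=
  ∃ l : List A, l.length = k + 1 ∧ l.Nodup ∧
    (l.take d).toFinset ∈ shadow d E ∧
    ((l.drop d).take (k - d)).toFinset ∈ C ((l.take d).toFinset) ∧
    ((l.drop 1).take d).toFinset ∈ shadow d E ∧
    (l.drop (d + 1)).toFinset ∈ C (((l.drop 1).take d).toFinset)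

/-- The `k`-graph generated by a `d`-vicinity: all sets `B ∪ S` with `S ∈ ∂_d(E)`
and `B ∈ C S`. -/
def generatedEdges (d : ℕ) (E : Finset (Finset A)) (C : Finset A → Finset (Finset A)) :
    Finset (Finset A) :=
  (shadow d E).biUnion fun S => (C S).image fun B => B ∪ S

/-- `α`-perturbed minimum relative `d`-degree at least `δ` for a `k`-graph on vertex
set `V` with edge set `E`. -/
def PerturbedDegLB (k d : ℕ) (a δ : ℝ) (V : Finset A) (E : Finset (Finset A)) : Prop :=
  ∀ j : ℕ, 1 ≤ j → j ≤ d →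
    (∀ S ∈ shadow j E,
      δ * (((V.card - j).choose (k - j) : ℕ) : ℝ) ≤ ((E.filter fun e => S ⊆ e).card : ℝ)) ∧
    ((((V.powersetCard j).filter fun S => S ∉ shadow j E).card : ℝ)
        ≤ a * ((V.card.choose j : ℕ) : ℝ)) ∧
    (∀ T : Finset A, (T ∈ shadow (j - 1) E ∨ (j = 1 ∧ T = ∅)) →
      ((((V.powersetCard j).filter fun S => T ⊆ S ∧ S ∉ shadow j E).card : ℝ)
        < a * ((V.card : ℝ) - (j : ℝ) + 1)))

/-- A `(γ, δ)`-Hamilton `d`-vicinity of a `k`-graph on `t = V.card` vertices. -/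
def IsHamVicinity (k d : ℕ) (γ δ : ℝ) (V : Finset A) (E : Finset (Finset A))
    (C : Finset A → Finset (Finset A)) : Prop :=
  (∀ S ∈ shadow d E, C S ⊆ link S E) ∧
  (∀ S ∈ shadow d E, TightlyConnected (k - d) (C S)) ∧
  (∀ S ∈ shadow d E, ∀ S' ∈ shadow d E, (C S ∩ C S').Nonempty) ∧
  (∀ S ∈ shadow d E, HasSwitcher (C S)) ∧
  HasArc k d E C ∧
  (∀ S ∈ shadow d E, HasFracMatching (C S) ((1 / (k : ℝ) + γ) * (V.card : ℝ))) ∧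
  (∀ S ∈ shadow d E, (1 - δ + γ) * ((V.card.choose (k - d) : ℕ) : ℝ) ≤ ((C S).card : ℝ))

/-- An `(a, γ, δ)`-Hamilton framework: a subgraph on vertex set `VH` with edge set `EH`
of a `k`-graph on vertex set `VR`, satisfying (F1)–(F5). -/
def IsHamFramework (k : ℕ) (a γ δ : ℝ) (VR VH : Finset A) (EH : Finset (Finset A)) : Prop :=
  (1 - a) * (VR.card : ℝ) ≤ (VH.card : ℝ) ∧
  TightlyConnected k EH ∧
  (∃ w : List A, IsClosedTightWalk k EH w ∧ w.length % k = 1 % k) ∧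
  RobustlyMatchable γ VH EH ∧
  (∀ v ∈ VH, (1 - δ + γ) * (((VH.card - 1).choose (k - 1) : ℕ) : ℝ)
      ≤ ((EH.filter fun e => v ∈ e).card : ℝ))

/-- A tight component: an edge-maximal tightly connected subgraph. -/
def IsTightComponent (k : ℕ) (E C : Finset (Finset A)) : Prop :=
  C ⊆ E ∧ TightlyConnected k C ∧
    ∀ C' : Finset (Finset A), C ⊆ C' → C' ⊆ E → TightlyConnected k C' → C' = C

/-- `δ` has the `(k,d)`-Hamilton-cycle property. -/
def HamCycleProp (k d : ℕ) (δ : ℝ) : Prop :=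
  ∀ μ : ℝ, 0 < μ → ∃ n₀ : ℕ, ∀ (B : Type) [DecidableEq B],
    ∀ (V : Finset B) (E : Finset (Finset B)),
      n₀ ≤ V.card → (∀ e ∈ E, e ⊆ V ∧ e.card = k) →
      (∀ S ⊆ V, S.card = d →
        (δ + μ) * (((V.card - d).choose (k - d) : ℕ) : ℝ)
          ≤ ((E.filter fun e => S ⊆ e).card : ℝ)) →
      HasTightHamCycle k V E

/-- `δ` has the `(k,d)`-Hamilton-framework property. -/
def HamFrameworkProp (k d : ℕ) (δ : ℝ) : Prop :=
  ∀ μ : ℝ, 0 < μ → ∃ γ₀ : ℝ, 0 < γ₀ ∧ ∀ γ : ℝ, 0 < γ → γ ≤ γ₀ →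
    ∃ α₀ : ℝ, 0 < α₀ ∧ ∀ a : ℝ, 0 < a → a ≤ α₀ →
      ∃ ε₀ : ℝ, 0 < ε₀ ∧ ∀ ε : ℝ, 0 < ε → ε ≤ ε₀ →
        ∃ t₀ : ℕ, ∀ t : ℕ, t₀ ≤ t →
          ∀ (B : Type) [DecidableEq B], ∀ (VR : Finset B) (ER : Finset (Finset B)),
            VR.card = t → (∀ e ∈ ER, e ⊆ VR ∧ e.card = k) →
            (∀ S ⊆ VR, S.card = d →
              (δ + μ) * (((t - d).choose (k - d) : ℕ) : ℝ)
                ≤ ((ER.filter fun e => S ⊆ e).card : ℝ)) →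
            ∀ I : Finset (Finset B), I ⊆ ER → (I.card : ℝ) ≤ ε * ((t.choose k : ℕ) : ℝ) →
              ∃ (VH : Finset B) (EH : Finset (Finset B)),
                VH ⊆ VR ∧ EH ⊆ ER ∧ (∀ e ∈ EH, e ⊆ VH) ∧ (∀ e ∈ EH, e ∉ I) ∧
                IsHamFramework k a γ δ VR VH EH

/-- `δ` has the `(k,d)`-Hamilton-vicinity property. -/
def HamVicinityProp (k d : ℕ) (δ : ℝ) : Prop :=
  ∀ μ : ℝ, 0 < μ → ∃ γ₀ : ℝ, 0 < γ₀ ∧ ∀ γ : ℝ, 0 < γ → γ ≤ γ₀ →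
    ∃ α₀ : ℝ, 0 < α₀ ∧ ∀ a : ℝ, 0 < a → a ≤ α₀ →
      ∃ t₀ : ℕ, ∀ t : ℕ, t₀ ≤ t →
        ∀ (B : Type) [DecidableEq B], ∀ (V : Finset B) (E : Finset (Finset B)),
          V.card = t → (∀ e ∈ E, e ⊆ V ∧ e.card = k) →
          PerturbedDegLB k d a (δ + μ) V E →
          (∀ v ∈ V, ∃ e ∈ E, v ∈ e) →
          ∃ C : Finset B → Finset (Finset B), IsHamVicinity k d γ δ V E C


lemma hz_window_succ (k : ℕ) (hk : 1 ≤ k) (w : List A)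
    (hlen : k + 1 ≤ w.length) (i : ℕ) :
    ∃ (C : Finset A) (a b : A),
      ((w.rotate i).take k).toFinset = insert a C ∧
      ((w.rotate (i+1)).take k).toFinset = insert b C := by
  rcases hl : w.rotate i with _ | ⟨h, t⟩
  · exfalso
    have h1 := List.length_rotate w i
    rw [hl] at h1
    simp at h1
    omega
  · have hlt : k ≤ t.length := by
      have h1 := List.length_rotate w i
      rw [hl] at h1
      simp at h1
      omega
    have hrot1 : w.rotate (i+1) = t ++ [h] := by
      rw [← List.rotate_rotate w i 1, hl]
      rcases t with _ | ⟨x, s⟩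
      · simp at hlt; omega
      · simp [List.rotate_cons_succ]
    have hk1 : k - 1 < t.length := by omega
    have happ : ∀ (l : List A) (c : A), (l ++ [c]).toFinset = insert c l.toFinset := by
      intro l c
      ext y
      simp [or_comm]
    refine ⟨(t.take (k-1)).toFinset, h, t[k-1], ?_, ?_⟩
    · have hck : (h :: t).take k = h :: t.take (k-1) := by
        obtain ⟨m, rfl⟩ : ∃ m, k = m + 1 := ⟨k - 1, by omega⟩
        simp
      rw [hck]
      simp
    · have htk : t.take k = t.take (k-1) ++ [t[k-1]] := by
        obtain ⟨m, rfl⟩ : ∃ m, k = m + 1 := ⟨k - 1, by omega⟩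
        simp [List.take_succ, List.getElem?_eq_getElem hk1]
      rw [hrot1, List.take_append_of_le_length hlt, htk, happ]


lemma hz_count (k : ℕ) (w : List A) (hnd : w.Nodup) (hk : 1 ≤ k)
    (hkn : k ≤ w.length) (x : A) (hx : x ∈ w) :
    ((Finset.range w.length).filter
        fun i => x ∈ ((w.rotate i).take k).toFinset).card = k := by
  set n := w.length with hn
  have hn0 : 0 < n := by omega
  obtain ⟨p, hp, hgp⟩ := List.mem_iff_getElem.mp hx
  -- membership characterization
  have hmem : ∀ i, (x ∈ ((w.rotate i).take k).toFinset ↔ ∃ m < k, (m + i) % n = p) := by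
    intro i
    rw [List.mem_toFinset, List.mem_iff_getElem]
    constructor
    · rintro ⟨m, hm, hgm⟩
      have hmlt : m < k := by
        have := List.length_take (i := k) (l := w.rotate i)
        rw [this] at hm
        omega
      refine ⟨m, hmlt, ?_⟩
      rw [List.getElem_take] at hgm
      have hrot : (w.rotate i)[m]'(by rw [List.length_rotate]; exact lt_of_lt_of_le hmlt hkn) = w[(m + i) % n]'(Nat.mod_lt _ hn0) := by
        have := List.get_rotate w i ⟨m, by rw [List.length_rotate]; exact lt_of_lt_of_le hmlt hkn⟩
        exact List.getElem_rotate w i m _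
      rw [hrot] at hgm
      have := hgm.trans hgp.symm
      exact (List.Nodup.getElem_inj_iff hnd).mp this
    · rintro ⟨m, hm, hmp⟩
      have hmn : m < n := lt_of_lt_of_le hm hkn
      have hlen : m < (List.take k (w.rotate i)).length := by
        rw [List.length_take, List.length_rotate]
        omega
      refine ⟨m, hlen, ?_⟩
      rw [List.getElem_take]
      have hrot : (w.rotate i)[m]'(by rw [List.length_rotate]; omega) = w[(m + i) % n]'(Nat.mod_lt _ hn0) := by
        have := List.get_rotate w i ⟨m, by rw [List.length_rotate]; omega⟩
        exact List.getElem_rotate w i m _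
      rw [hrot]
      simp only [hmp]
      exact hgp
  have himg : ((Finset.range n).filter
        fun i => x ∈ ((w.rotate i).take k).toFinset)
      = (Finset.range k).image (fun m => (p + n - m) % n) := by
    ext i
    simp only [mem_filter, mem_range, mem_image]
    constructor
    · rintro ⟨hi, hxi⟩
      obtain ⟨m, hm, hmp⟩ := (hmem i).mp hxi
      refine ⟨m, hm, ?_⟩
      -- (m + i) % n = p, i < n ⊢ (p + n - m) % n = i
      have hq := Nat.div_add_mod (m + i) n
      set q := (m + i) / n with hqd
      rw [hmp] at hq
      have hq1 : q ≤ 1 := by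
        by_contra hc
        push_neg at hc
        have : 2 * n ≤ n * q := by
          calc 2 * n = n * 2 := by ring
          _ ≤ n * q := Nat.mul_le_mul_left n hc
        omega
      have hcase : p + n - m = i ∨ p + n - m = i + n := by
        interval_cases q <;> omega
      rcases hcase with hc | hc
      · rw [hc]; exact Nat.mod_eq_of_lt hi
      · rw [hc, Nat.add_mod_right]; exact Nat.mod_eq_of_lt hi
    · rintro ⟨m, hm, rfl⟩
      refine ⟨Nat.mod_lt _ hn0, (hmem _).mpr ⟨m, hm, ?_⟩⟩
      have h1 : (m + (p + n - m) % n) % n = (m + (p + n - m)) % n :=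
        Nat.add_mod_mod _ _ _
      rw [h1]
      have h2 : m + (p + n - m) = p + n := by omega
      rw [h2, Nat.add_mod_right]
      exact Nat.mod_eq_of_lt hp
  rw [himg, Finset.card_image_of_injOn, Finset.card_range]
  have key : ∀ m₁ m₂, m₁ < k → m₂ < k → m₁ ≤ m₂ →
      (p + n - m₁) % n = (p + n - m₂) % n → m₁ = m₂ := by
    intro m₁ m₂ h₁ h₂ hle heq
    have hle' : p + n - m₂ ≤ p + n - m₁ := by omega
    have hmod : (p + n - m₂) ≡ (p + n - m₁) [MOD n] := heq.symm
    have hdvd := (Nat.modEq_iff_dvd' hle').mp hmod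
    have hsub : (p + n - m₁) - (p + n - m₂) = m₂ - m₁ := by omega
    rw [hsub] at hdvd
    have hlt : m₂ - m₁ < n := by omega
    have := Nat.eq_zero_of_dvd_of_lt hdvd hlt
    omega
  intro m₁ h₁ m₂ h₂ heq
  simp only [Finset.coe_range, Set.mem_Iio] at h₁ h₂
  rcases le_total m₁ m₂ with hle | hle
  · exact key m₁ m₂ h₁ h₂ hle heq
  · exact (key m₂ m₁ h₂ h₁ hle heq.symm).symm

/-- the Han–Zhao construction has no tight Hamilton cycle. -/
theorem han_zhao_construction {B : Type*} [DecidableEq B] (k j : ℕ) (hk : 2 ≤ k)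
    (hj1 : 1 ≤ j) (hjk : j ≤ k - 1) (V X : Finset B) (hXV : X ⊆ V) (hn : k + 1 ≤ V.card)
    (hlow : (j - 1) * V.card < k * X.card) (hhigh : k * X.card < (j + 1) * V.card) :
    ¬ HasTightHamCycle k V ((V.powersetCard k).filter fun S => (S ∩ X).card ≠ j) := by
  rintro ⟨w, hnd, hwV, hklen, hedge⟩
  set n := w.length with hnw
  have hnV : V.card = n := by rw [← hwV, List.toFinset_card_of_nodup hnd]
  have hkn : k + 1 ≤ n := hnV ▸ hn
  have hn0 : 0 < n := by omega
  set f : ℕ → ℕ := fun i => (((w.rotate i).take k).toFinset ∩ X).card with hf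
  -- f avoids j
  have hne : ∀ i, f i ≠ j := by
    intro i
    have hmod : f i = f (i % n) := by
      simp only [hf]
      rw [List.rotate_mod]
    rw [hmod]
    have := hedge (i % n) (Nat.mod_lt _ hn0)
    exact (Finset.mem_filter.mp this).2
  -- step bounds
  have hstep : ∀ i, f (i + 1) ≤ f i + 1 ∧ f i ≤ f (i + 1) + 1 := by
    intro i
    obtain ⟨C, a, b, hCa, hCb⟩ := hz_window_succ k (by omega) w hkn i
    simp only [hf, hCa, hCb]
    have hub : ∀ c : B, (insert c C ∩ X).card ≤ (C ∩ X).card + 1 := by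
      intro c
      by_cases hc : c ∈ X
      · rw [Finset.insert_inter_of_mem hc]
        exact Finset.card_insert_le _ _
      · rw [Finset.insert_inter_of_notMem hc]
        omega
    have hlb : ∀ c : B, (C ∩ X).card ≤ (insert c C ∩ X).card := by
      intro c
      exact Finset.card_le_card
        (Finset.inter_subset_inter (Finset.subset_insert _ _) (le_refl _))
    constructor
    · exact le_trans (hub b) (by have := hlb a; omega)
    · exact le_trans (hub a) (by have := hlb b; omega)
  -- total sum
  have hsum : ∑ i ∈ Finset.range n, f i = k * X.card := by
    have hstep1 : ∀ i, f i = (X.filter fun x => x ∈ ((w.rotate i).take k).toFinset).card := by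
      intro i
      simp only [hf]
      rw [Finset.inter_comm, ← Finset.filter_mem_eq_inter]
    calc ∑ i ∈ Finset.range n, f i
        = ∑ i ∈ Finset.range n, ∑ x ∈ X,
            (if x ∈ ((w.rotate i).take k).toFinset then 1 else 0) := by
          refine Finset.sum_congr rfl fun i _ => ?_
          rw [hstep1, Finset.card_filter]
      _ = ∑ x ∈ X, ∑ i ∈ Finset.range n,
            (if x ∈ ((w.rotate i).take k).toFinset then 1 else 0) := Finset.sum_comm
      _ = ∑ x ∈ X, k := by
          refine Finset.sum_congr rfl fun x hx => ?_
          rw [← Finset.card_filter]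
          exact hz_count k w hnd (by omega) (by omega) x
            (by rw [← List.mem_toFinset, hwV]; exact hXV hx)
      _ = k * X.card := by rw [Finset.sum_const, smul_eq_mul, mul_comm]
  -- propagation of being below j
  have hbelow : (∃ i, f i < j) → ∀ i, f i < j := by
    rintro ⟨i₀, hi₀⟩ i
    have hall : ∀ m, f (i₀ + m) < j := by
      intro m
      induction m with
      | zero => simpa using hi₀
      | succ m ih =>
        have h1 := (hstep (i₀ + m)).1
        have h2 := hne (i₀ + m + 1)
        have : i₀ + (m + 1) = (i₀ + m) + 1 := by omega
        rw [this]
        omega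
    -- f i = f (i₀ + (i + n * (i₀ + 1) - i₀)) since both ≡ i mod n... use periodicity
    have hper : ∀ a b, a % n = b % n → f a = f b := by
      intro a b hab
      simp only [hf]
      rw [← List.rotate_mod w a, ← hnw, hab, hnw, List.rotate_mod]
    have hx : (i₀ + (i + n * (i₀ / n + 1) - i₀)) % n = i % n := by
      have hd := Nat.div_add_mod i₀ n
      have hr : i₀ % n < n := Nat.mod_lt _ hn0
      have hD : n * (i₀ / n + 1) = n * (i₀ / n) + n := by ring
      have h1 : i₀ ≤ i + n * (i₀ / n + 1) := by omega
      have h2 : i₀ + (i + n * (i₀ / n + 1) - i₀) = i + n * (i₀ / n + 1) := by omega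
      rw [h2, Nat.add_mul_mod_self_left]
    have := hall (i + n * (i₀ / n + 1) - i₀)
    rw [hper _ _ hx] at this
    exact this
  by_cases hcase : ∃ i, f i < j
  · have hall := hbelow hcase
    have : ∑ i ∈ Finset.range n, f i ≤ (j - 1) * n := by
      calc ∑ i ∈ Finset.range n, f i ≤ ∑ _i ∈ Finset.range n, (j - 1) :=
            Finset.sum_le_sum fun i _ => by have := hall i; omega
        _ = (j - 1) * n := by rw [Finset.sum_const, smul_eq_mul, Finset.card_range, mul_comm]
    rw [hsum] at this
    rw [hnV] at hlow
    omega
  · push_neg at hcase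
    have hall : ∀ i, j + 1 ≤ f i := by
      intro i
      have h1 := hcase i
      have h2 := hne i
      omega
    have : (j + 1) * n ≤ ∑ i ∈ Finset.range n, f i := by
      calc (j + 1) * n = ∑ _i ∈ Finset.range n, (j + 1) := by
            rw [Finset.sum_const, smul_eq_mul, Finset.card_range, mul_comm]
        _ ≤ ∑ i ∈ Finset.range n, f i := Finset.sum_le_sum fun i _ => hall i
    rw [hsum] at this
    rw [hnV] at hhigh
    omega
end

section
/- (Perturbed degree lemma.) Let 1 ≤ d ≤ k−1 and δ > 0. There exists α_0 > 0 (depending on k and δ) such that for every 0 < α ≤ α_0 there exists ε_0 > 0 such that for every 0 < ε ≤ ε_0 there exists t_0 such that for every t ≥ t_0 the following holds: if R is a k-graph on t vertices with minimum relative d-degree at least δ, and I is a subgraph of R with at most ε·(t choose k) edges, then there exists a subgraph R' of R on all t vertices containing no edge of I which has α-perturbed minimum relative d-degree at least δ − α. -/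
open Finset

variable {A : Type*} [DecidableEq A]

section MyHelpers
variable {B : Type*} [DecidableEq B]

lemma my_double_count (A F : Finset (Finset B)) :
    ∑ T ∈ A, (F.filter (fun e => T ⊆ e)).card = ∑ e ∈ F, (A.filter (fun T => T ⊆ e)).card := by
  simp only [Finset.card_filter]
  rw [Finset.sum_comm]

lemma my_card_filter_superset (e U : Finset B) (hU : U ⊆ e) {n : ℕ} (hn : U.card ≤ n) :
    ((e.powersetCard n).filter (fun T => U ⊆ T)).card = (e.card - U.card).choose (n - U.card) := by
  rw [show e.card - U.card = (e \ U).card from (Finset.card_sdiff_of_subset hU).symm, ← Finset.card_powersetCard]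
  apply Finset.card_nbij' (fun T => T \ U) (fun W => W ∪ U)
  · intro T hT
    simp only [Finset.mem_coe, mem_filter, Finset.mem_powersetCard] at hT
    obtain ⟨⟨hTe, hTc⟩, hUT⟩ := hT
    rw [Finset.mem_coe, Finset.mem_powersetCard]
    constructor
    · exact Finset.sdiff_subset_sdiff hTe (le_refl U)
    · rw [Finset.card_sdiff_of_subset hUT, hTc]
  · intro W hW
    rw [Finset.mem_coe, Finset.mem_powersetCard] at hW
    obtain ⟨hWe, hWc⟩ := hW
    have hdisj : Disjoint W U := Finset.disjoint_left.mpr (fun x hx => (Finset.mem_sdiff.mp (hWe hx)).2)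
    simp only [Finset.mem_coe, mem_filter, Finset.mem_powersetCard]
    refine ⟨⟨?_, ?_⟩, Finset.subset_union_right⟩
    · exact Finset.union_subset (hWe.trans Finset.sdiff_subset) hU
    · rw [Finset.card_union_of_disjoint hdisj, hWc]
      have := Finset.card_le_card hU
      omega
  · intro T hT
    simp only [Finset.mem_coe, mem_filter] at hT
    exact Finset.sdiff_union_of_subset hT.2
  · intro W hW
    rw [Finset.mem_coe, Finset.mem_powersetCard] at hW
    have hdisj : Disjoint W U := Finset.disjoint_left.mpr (fun x hx => (Finset.mem_sdiff.mp (hW.1 hx)).2)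
    dsimp only; rw [Finset.union_sdiff_right, Finset.sdiff_eq_self_of_disjoint hdisj]

lemma my_choose_trin (n a b : ℕ) (hab : a ≤ b) :
    n.choose a * (n - a).choose (b - a) = n.choose b * b.choose a := by
  classical
  have key := my_double_count ((Finset.range n).powersetCard a) ((Finset.range n).powersetCard b)
  have hL : ∑ T ∈ (Finset.range n).powersetCard a,
      (((Finset.range n).powersetCard b).filter (fun e => T ⊆ e)).card
      = n.choose a * (n - a).choose (b - a) := by
    rw [Finset.sum_congr rfl (fun T hT => ?_), Finset.sum_const, smul_eq_mul,
      Finset.card_powersetCard, Finset.card_range]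
    rw [Finset.mem_powersetCard] at hT
    rw [my_card_filter_superset _ _ hT.1 (hT.2 ▸ hab), Finset.card_range, hT.2]
  have hR : ∑ e ∈ (Finset.range n).powersetCard b,
      (((Finset.range n).powersetCard a).filter (fun T => T ⊆ e)).card
      = n.choose b * b.choose a := by
    rw [Finset.sum_congr rfl (fun e he => ?_), Finset.sum_const, smul_eq_mul,
      Finset.card_powersetCard, Finset.card_range]
    rw [Finset.mem_powersetCard] at he
    have : ((Finset.range n).powersetCard a).filter (fun T => T ⊆ e) = e.powersetCard a := by
      ext T
      simp only [Finset.mem_filter, Finset.mem_powersetCard]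
      exact ⟨fun h => ⟨h.2, h.1.2⟩, fun h => ⟨⟨h.1.trans he.1, h.2⟩, h.1⟩⟩
    rw [this, Finset.card_powersetCard, he.2]
  rw [← hL, key, hR]

lemma my_choose_step (n m : ℕ) (h : 2 * m ≤ n + 1) : (n + 1).choose m ≤ 2 * n.choose m := by
  rcases m with _ | m
  · simp
  rw [Nat.choose_succ_succ, two_mul]
  have h1 : n.choose m ≤ n.choose (m + 1) := by
    rcases Nat.lt_or_ge m (n / 2) with h' | h'
    · exact Nat.choose_le_succ_of_lt_half_left h'
    · have hn : n = 2 * m + 1 := by omega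
      subst hn
      have := Nat.choose_symm (show m + 1 ≤ 2 * m + 1 by omega)
      rw [show 2 * m + 1 - (m + 1) = m by omega] at this
      exact this.le
  exact Nat.add_le_add h1 le_rfl

lemma my_choose_add_le (n m : ℕ) (h : 2 * m ≤ n + 1) :
    ∀ i, (n + i).choose m ≤ 2 ^ i * n.choose m := by
  intro i
  induction i with
  | zero => simp
  | succ i ih =>
      have := my_choose_step (n + i) m (by omega)
      calc (n + (i+1)).choose m ≤ 2 * (n + i).choose m := by rw [show n+(i+1) = n+i+1 by omega]; exact this
        _ ≤ 2 * (2 ^ i * n.choose m) := by omega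
        _ = 2 ^ (i+1) * n.choose m := by ring

lemma my_choose_le_two_pow (n m : ℕ) : n.choose m ≤ 2 ^ n := by
  rcases le_or_gt m n with h | h
  · calc n.choose m ≤ ∑ i ∈ Finset.range (n+1), n.choose i :=
        Finset.single_le_sum (fun i _ => Nat.zero_le _) (Finset.mem_range.mpr (by omega))
      _ = 2 ^ n := Nat.sum_range_choose n
  · rw [Nat.choose_eq_zero_of_lt h]; exact Nat.zero_le _

/-- Degree inheritance: min relative d-degree passes down to j-sets, j ≤ d. -/
lemma my_deg_inherit (V : Finset B) (E : Finset (Finset B)) (k d t : ℕ) (δ : ℝ)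
    (hV : V.card = t) (hE : ∀ e ∈ E, e ⊆ V ∧ e.card = k) (hdk : d ≤ k) (hkt : k ≤ t)
    (hdeg : ∀ S ⊆ V, S.card = d →
      δ * (((t - d).choose (k - d) : ℕ) : ℝ) ≤ ((E.filter fun e => S ⊆ e).card : ℝ))
    (S : Finset B) (hS : S ⊆ V) (hj : S.card ≤ d) :
    δ * (((t - S.card).choose (k - S.card) : ℕ) : ℝ) ≤ ((E.filter fun e => S ⊆ e).card : ℝ) := by
  classical
  set j := S.card with hjdef
  have hjt : j ≤ t := by
    have := Finset.card_le_card hS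
    omega
  set A := (V.powersetCard d).filter (fun D => S ⊆ D) with hA
  have hAcard : A.card = (t - j).choose (d - j) := by
    rw [hA, my_card_filter_superset V S hS hj, hV]
  -- double count
  have hsum : ∑ D ∈ A, (E.filter (fun e => D ⊆ e)).card
      = (E.filter (fun e => S ⊆ e)).card * ((k - j).choose (d - j)) := by
    rw [my_double_count]
    have hper : ∀ e ∈ E, (A.filter (fun D => D ⊆ e)).card
        = if S ⊆ e then (k - j).choose (d - j) else 0 := by
      intro e he
      by_cases hSe : S ⊆ e
      · rw [if_pos hSe]
        have heq : A.filter (fun D => D ⊆ e) = (e.powersetCard d).filter (fun D => S ⊆ D) := by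
          ext D
          simp only [hA, Finset.mem_filter, Finset.mem_powersetCard]
          constructor
          · rintro ⟨⟨⟨hDV, hDc⟩, hSD⟩, hDe⟩
            exact ⟨⟨hDe, hDc⟩, hSD⟩
          · rintro ⟨⟨hDe, hDc⟩, hSD⟩
            exact ⟨⟨⟨hDe.trans (hE e he).1, hDc⟩, hSD⟩, hDe⟩
        rw [heq, my_card_filter_superset e S hSe hj, (hE e he).2]
      · rw [if_neg hSe]
        rw [Finset.card_eq_zero, Finset.filter_eq_empty_iff]
        intro D hD hDe
        rw [hA, Finset.mem_filter] at hD
        exact hSe (hD.2.trans hDe)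
    rw [Finset.sum_congr rfl hper, ← Finset.sum_filter, Finset.sum_const, smul_eq_mul,
      mul_comm]
  -- lower bound the sum
  have hlow : (A.card : ℝ) * (δ * (((t - d).choose (k - d) : ℕ) : ℝ))
      ≤ ((∑ D ∈ A, (E.filter (fun e => D ⊆ e)).card : ℕ) : ℝ) := by
    push_cast
    have h := Finset.card_nsmul_le_sum A
      (fun D => ((E.filter (fun e => D ⊆ e)).card : ℝ)) (δ * (((t - d).choose (k - d) : ℕ) : ℝ))
      (fun D hD => by
        rw [hA, Finset.mem_filter, Finset.mem_powersetCard] at hD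
        exact hdeg D hD.1.1 hD.1.2)
    rw [nsmul_eq_mul] at h
    exact_mod_cast h
  rw [hsum] at hlow
  rw [hAcard] at hlow
  have htrin : (t - j).choose (d - j) * (t - d).choose (k - d)
      = (t - j).choose (k - j) * (k - j).choose (d - j) := by
    have := my_choose_trin (t - j) (d - j) (k - j) (by omega)
    rw [show t - j - (d - j) = t - d by omega, show k - j - (d - j) = k - d by omega] at this
    exact this
  have hpos : (0:ℝ) < ((k - j).choose (d - j) : ℕ) := by
    have : 0 < (k - j).choose (d - j) := Nat.choose_pos (by omega)
    exact_mod_cast this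
  have hfin : δ * (((t - j).choose (k - j) : ℕ) : ℝ) * ((k - j).choose (d - j) : ℕ)
      ≤ ((E.filter (fun e => S ⊆ e)).card : ℝ) * ((k - j).choose (d - j) : ℕ) := by
    have hc : ((t - j).choose (d - j) : ℝ) * ((t - d).choose (k - d) : ℝ)
        = ((t - j).choose (k - j) : ℝ) * ((k - j).choose (d - j) : ℝ) := by
      exact_mod_cast congrArg (Nat.cast (R := ℝ)) htrin
    calc δ * (((t - j).choose (k - j) : ℕ) : ℝ) * (((k - j).choose (d - j) : ℕ) : ℝ)
        = ((t - j).choose (d - j) : ℝ) * (δ * ((t - d).choose (k - d) : ℝ)) := by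
          rw [mul_assoc, ← hc]; ring
      _ ≤ ((E.filter (fun e => S ⊆ e)).card : ℝ) * ((k - j).choose (d - j) : ℕ) := by
          push_cast at hlow ⊢
          linarith
  exact le_of_mul_le_mul_right hfin hpos

/-- Heavy extension bound: few heavy (u+m)-sets extend a light u-set. -/
lemma my_heavy_ext (V : Finset B) (I : Finset (Finset B)) (t k : ℕ)
    (hV : V.card = t) (hI : ∀ e ∈ I, e ⊆ V ∧ e.card = k) (hkt : k ≤ t)
    (U : Finset B) (m : ℕ) (hm : 1 ≤ m) (hum : U.card + m ≤ k)
    (θ1 θ2 : ℝ) (hθ2 : 0 < θ2)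
    (hlight : ((I.filter (fun e => U ⊆ e)).card : ℝ)
      ≤ θ1 * (((t - U.card).choose (k - U.card) : ℕ) : ℝ))
    (H : Finset (Finset B))
    (hH : ∀ T ∈ H, T ⊆ V ∧ T.card = U.card + m ∧ U ⊆ T)
    (hheavy : ∀ T ∈ H, θ2 * (((t - (U.card + m)).choose (k - (U.card + m)) : ℕ) : ℝ)
      ≤ ((I.filter (fun e => T ⊆ e)).card : ℝ)) :
    (H.card : ℝ) ≤ (θ1 / θ2) * (((t - U.card).choose m : ℕ) : ℝ) := by
  classical
  set u := U.card with hu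
  have hut : u + m ≤ t := le_trans hum hkt
  have hc2pos : (0:ℝ) < ((t - (u + m)).choose (k - (u + m)) : ℕ) := by
    exact_mod_cast Nat.choose_pos (by omega)
  -- lower bound for the sum of degrees
  have hlow : (H.card : ℝ) * (θ2 * ((t - (u + m)).choose (k - (u + m)) : ℕ))
      ≤ ((∑ T ∈ H, (I.filter (fun e => T ⊆ e)).card : ℕ) : ℝ) := by
    push_cast
    have h := Finset.card_nsmul_le_sum H
      (fun T => ((I.filter (fun e => T ⊆ e)).card : ℝ))
      (θ2 * (((t - (u + m)).choose (k - (u + m)) : ℕ) : ℝ))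
      (fun T hT => hheavy T hT)
    rw [nsmul_eq_mul] at h
    exact_mod_cast h
  -- upper bound via double counting
  have hup : ∑ T ∈ H, (I.filter (fun e => T ⊆ e)).card
      ≤ (I.filter (fun e => U ⊆ e)).card * (k - u).choose m := by
    rw [my_double_count]
    have hper : ∀ e ∈ I, (H.filter (fun T => T ⊆ e)).card
        ≤ if U ⊆ e then (k - u).choose m else 0 := by
      intro e he
      by_cases hUe : U ⊆ e
      · rw [if_pos hUe]
        have hsub : H.filter (fun T => T ⊆ e) ⊆ (e.powersetCard (u + m)).filter (fun T => U ⊆ T) := by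
          intro T hT
          rw [Finset.mem_filter] at hT ⊢
          rw [Finset.mem_powersetCard]
          exact ⟨⟨hT.2, (hH T hT.1).2.1⟩, (hH T hT.1).2.2⟩
        calc (H.filter (fun T => T ⊆ e)).card ≤ _ := Finset.card_le_card hsub
          _ = (k - u).choose m := by
            rw [my_card_filter_superset e U hUe (by omega), (hI e he).2,
              show u + m - u = m by omega]
      · rw [if_neg hUe]
        rw [Nat.le_zero, Finset.card_eq_zero, Finset.filter_eq_empty_iff]
        intro T hT hTe
        exact hUe ((hH T hT).2.2.trans hTe)
    calc ∑ e ∈ I, (H.filter (fun T => T ⊆ e)).card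
        ≤ ∑ e ∈ I, if U ⊆ e then (k - u).choose m else 0 := Finset.sum_le_sum hper
      _ = (I.filter (fun e => U ⊆ e)).card * (k - u).choose m := by
          rw [← Finset.sum_filter, Finset.sum_const, smul_eq_mul]
  -- combine
  have hcomb : (H.card : ℝ) * (θ2 * ((t - (u + m)).choose (k - (u + m)) : ℕ))
      ≤ θ1 * ((t - u).choose (k - u) : ℕ) * ((k - u).choose m : ℕ) := by
    calc (H.card : ℝ) * (θ2 * ((t - (u + m)).choose (k - (u + m)) : ℕ))
        ≤ ((∑ T ∈ H, (I.filter (fun e => T ⊆ e)).card : ℕ) : ℝ) := hlow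
      _ ≤ ((I.filter (fun e => U ⊆ e)).card : ℝ) * ((k - u).choose m : ℕ) := by
          exact_mod_cast Nat.cast_le.mpr hup
      _ ≤ θ1 * ((t - u).choose (k - u) : ℕ) * ((k - u).choose m : ℕ) := by
          apply mul_le_mul_of_nonneg_right hlight (by positivity)
  have htrin : (t - u).choose m * (t - u - m).choose (k - u - m)
      = (t - u).choose (k - u) * (k - u).choose m := by
    have := my_choose_trin (t - u) m (k - u) (by omega)
    rwa [show (k - u) - m = k - u - m by omega] at this
  have hc : ((t - u).choose (k - u) : ℝ) * ((k - u).choose m : ℝ)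
      = ((t - u).choose m : ℝ) * ((t - (u + m)).choose (k - (u + m)) : ℝ) := by
    rw [show t - (u + m) = t - u - m by omega, show k - (u + m) = k - u - m by omega]
    exact_mod_cast (congrArg (Nat.cast (R := ℝ)) htrin).symm
  rw [mul_assoc θ1, hc, ← mul_assoc θ1] at hcomb
  -- cancel the positive factor and divide by θ2
  have h3 : (H.card : ℝ) * θ2 ≤ θ1 * ((t - u).choose m : ℕ) := by
    have := le_of_mul_le_mul_right (by
      calc (H.card : ℝ) * θ2 * ((t - (u + m)).choose (k - (u + m)) : ℕ)
          = (H.card : ℝ) * (θ2 * ((t - (u + m)).choose (k - (u + m)) : ℕ)) := by ring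
        _ ≤ θ1 * ((t - u).choose m : ℕ) * ((t - (u + m)).choose (k - (u + m)) : ℕ) := hcomb) hc2pos
    exact this
  rw [div_mul_eq_mul_div, le_div_iff₀ hθ2]
  linarith

end MyHelpers

set_option maxHeartbeats 1000000 in
/-- Perturbed degree lemma. -/
theorem perturbed_degree_lemma (k d : ℕ) (hk : 2 ≤ k) (hd : 1 ≤ d) (hdk : d ≤ k - 1)
    (δ : ℝ) (hδ : 0 < δ) :
    ∃ α₀ : ℝ, 0 < α₀ ∧ ∀ a : ℝ, 0 < a → a ≤ α₀ →
      ∃ ε₀ : ℝ, 0 < ε₀ ∧ ∀ ε : ℝ, 0 < ε → ε ≤ ε₀ →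
        ∃ t₀ : ℕ, ∀ t : ℕ, t₀ ≤ t →
          ∀ (B : Type) [DecidableEq B], ∀ (V : Finset B) (E I : Finset (Finset B)),
            V.card = t → (∀ e ∈ E, e ⊆ V ∧ e.card = k) →
            (∀ S ⊆ V, S.card = d →
              δ * (((t - d).choose (k - d) : ℕ) : ℝ)
                ≤ ((E.filter fun e => S ⊆ e).card : ℝ)) →
            I ⊆ E → (I.card : ℝ) ≤ ε * ((t.choose k : ℕ) : ℝ) →
            ∃ E' : Finset (Finset B), E' ⊆ E ∧ (∀ e ∈ E', e ∉ I) ∧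
              PerturbedDegLB k d a (δ - a) V E' := by
  classical
  have hdklt : d < k := by omega
  set C1 : ℝ := (d : ℝ) * 8 ^ k with hC1
  set Kc : ℝ := ((d : ℝ) + 2) * 8 ^ k * 2 ^ (k + 1) with hKcdef
  have hd0 : (0:ℝ) ≤ (d:ℝ) := Nat.cast_nonneg d
  have h8k : (1:ℝ) ≤ 8 ^ k := by
    have := pow_le_pow_left₀ (by norm_num : (0:ℝ) ≤ 1) (by norm_num : (1:ℝ) ≤ 8) k
    simpa using this
  have h2k1 : (1:ℝ) ≤ 2 ^ (k+1) := by
    have := pow_le_pow_left₀ (by norm_num : (0:ℝ) ≤ 1) (by norm_num : (1:ℝ) ≤ 2) (k+1)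
    simpa using this
  have hKc1 : (1:ℝ) ≤ Kc := by
    rw [hKcdef]
    calc (1:ℝ) ≤ (↑d + 2) * 1 * 1 := by linarith
      _ ≤ (↑d + 2) * 8 ^ k * 2 ^ (k+1) := by gcongr <;> linarith
  have hKcC1 : C1 + 1 ≤ Kc := by
    rw [hKcdef, hC1]
    calc (↑d:ℝ) * 8 ^ k + 1 ≤ (↑d:ℝ) * 8 ^ k + 2 * 8 ^ k := by linarith
      _ = ((↑d:ℝ) + 2) * 8 ^ k * 1 := by ring
      _ ≤ (↑d + 2) * 8 ^ k * 2 ^ (k+1) := by gcongr <;> nlinarith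
  have hKc2 : (2:ℝ) ^ (k+1) ≤ Kc := by
    rw [hKcdef]
    calc (2:ℝ) ^ (k+1) = 1 * 1 * 2 ^ (k+1) := by ring
      _ ≤ (↑d + 2) * 8 ^ k * 2 ^ (k+1) := by gcongr <;> linarith
  have hKcpos : (0:ℝ) < Kc := lt_of_lt_of_le one_pos hKc1
  refine ⟨min (δ / 2) 1, by positivity, ?_⟩
  intro a ha haa
  have ha1 : a ≤ 1 := le_trans haa (min_le_right _ _)
  have haδ : a ≤ δ / 2 := le_trans haa (min_le_left _ _)
  set β : ℝ := a / Kc with hβdef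
  have hβpos : 0 < β := div_pos ha hKcpos
  have hβ1 : β ≤ 1 := by rw [hβdef, div_le_one hKcpos]; linarith
  set θ : ℕ → ℝ := fun u => β ^ (d + 1 - u) with hθdef
  have hθpos : ∀ u, 0 < θ u := fun u => pow_pos hβpos _
  have hθleβ : ∀ u, u ≤ d → θ u ≤ β := by
    intro u hu
    calc θ u = β ^ (d + 1 - u) := rfl
      _ ≤ β ^ 1 := pow_le_pow_of_le_one hβpos.le hβ1 (by omega)
      _ = β := pow_one β
  have hθ0le : ∀ u, θ 0 ≤ θ u := by
    intro u
    calc θ 0 = β ^ (d + 1 - 0) := rfl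
      _ ≤ β ^ (d + 1 - u) := pow_le_pow_of_le_one hβpos.le hβ1 (by omega)
      _ = θ u := rfl
  have hθstep : ∀ u m, u + m ≤ d → θ u = β ^ m * θ (u + m) := by
    intro u m h
    show β ^ (d + 1 - u) = β ^ m * β ^ (d + 1 - (u + m))
    rw [← pow_add]
    congr 1
    omega
  refine ⟨a * θ 0 / 2 ^ (k + 2), by positivity, ?_⟩
  intro ε hε hεε
  refine ⟨8 * (k + d + 2), ?_⟩
  intro t ht B _inst V E I hV hE hdeg hIE hI
  classical
  have hkt : k ≤ t := by omega
  set Light : Finset B → Prop :=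
    fun T => ((I.filter (fun e => T ⊆ e)).card : ℝ)
        < θ T.card * (((t - T.card).choose (k - T.card) : ℕ) : ℝ) with hLightdef
  set E' : Finset (Finset B) :=
    E.filter (fun e => e ∉ I ∧ ∀ T ∈ e.powerset, T.card ≤ d → Light T) with hE'def
  have hIV : ∀ e ∈ I, e ⊆ V ∧ e.card = k := fun e he => hE e (hIE he)
  have hchoosetk : (0:ℝ) < ((t.choose k : ℕ) : ℝ) := by exact_mod_cast Nat.choose_pos hkt
  have hεθ0 : ε < θ 0 := by
    have h2k : (4:ℝ) ≤ 2^(k+2) := by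
      calc (4:ℝ) = 2^2 := by norm_num
        _ ≤ 2^(k+2) := pow_le_pow_right₀ (by norm_num) (by omega)
    have hθ0pos := hθpos 0
    have : ε ≤ a * θ 0 / 2 ^ (k + 2) := hεε
    have h2pos : (0:ℝ) < 2^(k+2) := by positivity
    rw [le_div_iff₀ h2pos] at this
    nlinarith
  have hIdeg : ((I.filter (fun e => (∅ : Finset B) ⊆ e)).card : ℝ) ≤ ε * ((t.choose k : ℕ) : ℝ) := by
    rw [Finset.filter_true_of_mem (fun e _ => Finset.empty_subset e)]
    exact hI
  have hlightempty : Light ∅ := by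
    show ((I.filter (fun e => (∅ : Finset B) ⊆ e)).card : ℝ)
        < θ (∅ : Finset B).card * (((t - (∅ : Finset B).card).choose (k - (∅ : Finset B).card) : ℕ) : ℝ)
    rw [Finset.card_empty, Nat.sub_zero, Nat.sub_zero]
    calc ((I.filter (fun e => (∅ : Finset B) ⊆ e)).card : ℝ) ≤ ε * ((t.choose k : ℕ) : ℝ) := hIdeg
      _ < θ 0 * ((t.choose k : ℕ) : ℝ) := mul_lt_mul_of_pos_right hεθ0 hchoosetk
  have hsub_light : ∀ e ∈ E', ∀ T, T ⊆ e → T.card ≤ d → Light T := by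
    intro e he T hTe hTd
    rw [hE'def, Finset.mem_filter] at he
    exact he.2.2 T (Finset.mem_powerset.mpr hTe) hTd
  have hdeglow : ∀ S, S ⊆ V → S.card ≤ d →
      δ * (((t - S.card).choose (k - S.card) : ℕ) : ℝ) ≤ ((E.filter fun e => S ⊆ e).card : ℝ) :=
    fun S hS hj => my_deg_inherit V E k d t δ hV hE (by omega) hkt hdeg S hS hj
  -- the heavy-extension bound, specialized
  have hext : ∀ U : Finset B, U ⊆ V → Light U → ∀ m, 1 ≤ m → U.card + m ≤ d →
      (((V.powersetCard (U.card + m)).filter (fun T => U ⊆ T ∧ ¬ Light T)).card : ℝ)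
        ≤ β * (((t - U.card).choose m : ℕ) : ℝ) := by
    intro U hUV hUl m hm humd
    have hum : U.card + m ≤ k := by omega
    have hUlight : ((I.filter (fun e => U ⊆ e)).card : ℝ)
        ≤ θ U.card * (((t - U.card).choose (k - U.card) : ℕ) : ℝ) := le_of_lt hUl
    have key := my_heavy_ext V I t k hV hIV hkt U m hm hum (θ U.card) (θ (U.card + m))
      (hθpos _) hUlight
      ((V.powersetCard (U.card + m)).filter (fun T => U ⊆ T ∧ ¬ Light T))
      (fun T hT => by
        rw [Finset.mem_filter, Finset.mem_powersetCard] at hT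
        exact ⟨hT.1.1, hT.1.2, hT.2.1⟩)
      (fun T hT => by
        rw [Finset.mem_filter, Finset.mem_powersetCard] at hT
        have hneg := hT.2.2
        simp only [hLightdef] at hneg
        have hTc := hT.1.2
        rw [hTc] at hneg
        exact not_lt.1 hneg)
    have hratio : θ U.card / θ (U.card + m) = β ^ m := by
      rw [hθstep U.card m humd]
      rw [mul_div_assoc, div_self (hθpos _).ne', mul_one]
    rw [hratio] at key
    calc (((V.powersetCard (U.card + m)).filter (fun T => U ⊆ T ∧ ¬ Light T)).card : ℝ)
        ≤ β ^ m * (((t - U.card).choose m : ℕ) : ℝ) := key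
      _ ≤ β * (((t - U.card).choose m : ℕ) : ℝ) := by
          apply mul_le_mul_of_nonneg_right _ (by positivity)
          calc β ^ m ≤ β ^ 1 := pow_le_pow_of_le_one hβpos.le hβ1 hm
            _ = β := pow_one β
  -- the main loss bound
  have hβcaliforn : (0:ℝ) ≤ β := hβpos.le
  have hloss : ∀ S : Finset B, S ⊆ V → S.card ≤ d → (∀ T, T ⊆ S → Light T) →
      ((E.filter (fun e => S ⊆ e)).card : ℝ)
        ≤ ((E'.filter (fun e => S ⊆ e)).card : ℝ)
          + a * (((t - S.card).choose (k - S.card) : ℕ) : ℝ) := by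
    intro S hSV hSd hSl
    set j := S.card with hjdef
    have hjt : j ≤ t := le_trans (Finset.card_le_card hSV) (le_of_eq hV)
    set HeavyE := E.filter (fun e => S ⊆ e ∧ ∃ T ∈ e.powerset, T.card ≤ d ∧ ¬ Light T)
      with hHeavyEdef
    have hCkj : (0:ℝ) ≤ (((t - j).choose (k - j) : ℕ) : ℝ) := Nat.cast_nonneg _
    -- split the degree
    have hsplit : (E.filter (fun e => S ⊆ e)).card
        ≤ (E'.filter (fun e => S ⊆ e)).card + ((I.filter (fun e => S ⊆ e)).card + HeavyE.card) := by
      have hsub : E.filter (fun e => S ⊆ e)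
          ⊆ ((E'.filter (fun e => S ⊆ e)) ∪ (I.filter (fun e => S ⊆ e))) ∪ HeavyE := by
        intro e he
        rw [Finset.mem_filter] at he
        by_cases heE' : e ∈ E'
        · exact Finset.mem_union.mpr (Or.inl (Finset.mem_union.mpr
            (Or.inl (Finset.mem_filter.mpr ⟨heE', he.2⟩))))
        · by_cases heI : e ∈ I
          · exact Finset.mem_union.mpr (Or.inl (Finset.mem_union.mpr
              (Or.inr (Finset.mem_filter.mpr ⟨heI, he.2⟩))))
          · rw [hE'def, Finset.mem_filter] at heE'
            push_neg at heE'
            obtain ⟨T, hT1, hT2, hT3⟩ := heE' he.1 heI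
            exact Finset.mem_union.mpr (Or.inr (Finset.mem_filter.mpr
              ⟨he.1, he.2, T, hT1, hT2, hT3⟩))
      calc (E.filter (fun e => S ⊆ e)).card
          ≤ (((E'.filter (fun e => S ⊆ e)) ∪ (I.filter (fun e => S ⊆ e))) ∪ HeavyE).card :=
            Finset.card_le_card hsub
        _ ≤ ((E'.filter (fun e => S ⊆ e)) ∪ (I.filter (fun e => S ⊆ e))).card + HeavyE.card :=
            Finset.card_union_le _ _
        _ ≤ (E'.filter (fun e => S ⊆ e)).card + (I.filter (fun e => S ⊆ e)).card + HeavyE.card :=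
            Nat.add_le_add_right (Finset.card_union_le _ _) _
        _ = _ := by omega
    -- the I part
    have hIpart : ((I.filter (fun e => S ⊆ e)).card : ℝ) ≤ β * (((t - j).choose (k - j) : ℕ) : ℝ) := by
      have hSlight := hSl S (subset_refl S)
      rw [hLightdef] at hSlight
      have hθj := hθleβ j hSd
      calc ((I.filter (fun e => S ⊆ e)).card : ℝ)
          ≤ θ j * (((t - j).choose (k - j) : ℕ) : ℝ) := le_of_lt hSlight
        _ ≤ β * (((t - j).choose (k - j) : ℕ) : ℝ) := mul_le_mul_of_nonneg_right hθj hCkj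
    -- the heavy part
    have hHeavy : (HeavyE.card : ℝ) ≤ C1 * β * (((t - j).choose (k - j) : ℕ) : ℝ) := by
      set 𝒲 := V.powerset.filter (fun W => W.Nonempty ∧ W.card + j ≤ k ∧ Disjoint W S ∧
        ∃ U ∈ S.powerset, (U ∪ W).card ≤ d ∧ ¬ Light (U ∪ W)) with h𝒲def
      have hHsub : HeavyE ⊆ 𝒲.biUnion (fun W => E.filter (fun e => S ∪ W ⊆ e)) := by
        intro e he
        rw [hHeavyEdef, Finset.mem_filter] at he
        obtain ⟨heE, hSe, T, hTpow, hTd, hTheavy⟩ := he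
        rw [Finset.mem_powerset] at hTpow
        have hTne : ¬ T ⊆ S := fun hc => hTheavy (hSl T hc)
        have hrec : (T ∩ S) ∪ (T \ S) = T := by
          rw [Finset.union_comm]
          exact Finset.sdiff_union_inter T S
        refine Finset.mem_biUnion.mpr ⟨T \ S, ?_, ?_⟩
        · rw [h𝒲def, Finset.mem_filter, Finset.mem_powerset]
          refine ⟨(Finset.sdiff_subset.trans hTpow).trans (hE e heE).1, ?_, ?_,
            Finset.sdiff_disjoint, T ∩ S, Finset.mem_powerset.mpr Finset.inter_subset_right, ?_⟩
          · rw [Finset.sdiff_nonempty]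
            exact hTne
          · have h1 : (T \ S) ∪ S ⊆ e := Finset.union_subset (Finset.sdiff_subset.trans hTpow) hSe
            have h2 : (T \ S).card + j = ((T \ S) ∪ S).card :=
              (Finset.card_union_of_disjoint Finset.sdiff_disjoint).symm
            calc (T \ S).card + j = ((T \ S) ∪ S).card := h2
              _ ≤ e.card := Finset.card_le_card h1
              _ = k := (hE e heE).2
          · rw [hrec]
            exact ⟨hTd, hTheavy⟩
        · exact Finset.mem_filter.mpr ⟨heE,
            Finset.union_subset hSe (Finset.sdiff_subset.trans hTpow)⟩
      have hperW : ∀ W ∈ 𝒲, (E.filter (fun e => S ∪ W ⊆ e)).card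
          ≤ (t - (j + W.card)).choose (k - (j + W.card)) := by
        intro W hWm
        rw [h𝒲def, Finset.mem_filter, Finset.mem_powerset] at hWm
        obtain ⟨hWV, hWne, hWk, hWdisj, -⟩ := hWm
        have hsub2 : E.filter (fun e => S ∪ W ⊆ e)
            ⊆ (V.powersetCard k).filter (fun e => S ∪ W ⊆ e) := by
          intro e he
          rw [Finset.mem_filter] at he ⊢
          exact ⟨Finset.mem_powersetCard.mpr ⟨(hE e he.1).1, (hE e he.1).2⟩, he.2⟩
        have hSWcard : (S ∪ W).card = j + W.card := by
          rw [Finset.union_comm, Finset.card_union_of_disjoint hWdisj]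
          omega
        calc (E.filter (fun e => S ∪ W ⊆ e)).card
            ≤ ((V.powersetCard k).filter (fun e => S ∪ W ⊆ e)).card := Finset.card_le_card hsub2
          _ = (t - (j + W.card)).choose (k - (j + W.card)) := by
              rw [my_card_filter_superset V (S ∪ W) (Finset.union_subset hSV hWV)
                (by rw [hSWcard]; omega), hV, hSWcard]
      have hmaps : ∀ W ∈ 𝒲, W.card ∈ Finset.Icc 1 d := by
        intro W hWm
        rw [h𝒲def, Finset.mem_filter] at hWm
        obtain ⟨-, hWne, -, -, U, hU, hUd, -⟩ := hWm
        rw [Finset.mem_Icc]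
        exact ⟨Finset.card_pos.mpr hWne,
          le_trans (Finset.card_le_card Finset.subset_union_right) hUd⟩
      -- per fiber bound
      have hfiber : ∀ m ∈ Finset.Icc 1 d,
          (((𝒲.filter (fun W => W.card = m)).card : ℝ))
              * (((t - (j + m)).choose (k - (j + m)) : ℕ) : ℝ)
            ≤ 8^k * β * (((t - j).choose (k - j) : ℕ) : ℝ) := by
        intro m hm
        rw [Finset.mem_Icc] at hm
        by_cases hjm : j + m ≤ k
        · -- count the fiber
          have hsub3 : 𝒲.filter (fun W => W.card = m) ⊆ S.powerset.biUnion (fun U =>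
              (𝒲.filter (fun W => W.card = m)).filter
                (fun W => (U ∪ W).card ≤ d ∧ ¬ Light (U ∪ W))) := by
            intro W hWm'
            have hWm2 := hWm'
            rw [Finset.mem_filter, h𝒲def, Finset.mem_filter] at hWm2
            obtain ⟨⟨-, -, -, -, U, hU, hUd, hUL⟩, -⟩ := hWm2
            exact Finset.mem_biUnion.mpr ⟨U, hU, Finset.mem_filter.mpr ⟨hWm', hUd, hUL⟩⟩
          have hperU : ∀ U ∈ S.powerset,
              ((((𝒲.filter (fun W => W.card = m)).filter
                  (fun W => (U ∪ W).card ≤ d ∧ ¬ Light (U ∪ W))).card : ℝ))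
                ≤ β * (2^k * (((t - j).choose m : ℕ) : ℝ)) := by
            intro U hU
            rw [Finset.mem_powerset] at hU
            have hdisjUW : ∀ W ∈ 𝒲, Disjoint U W := by
              intro W hWm'
              rw [h𝒲def, Finset.mem_filter] at hWm'
              exact (hWm'.2.2.2.1.mono_right hU).symm
            by_cases hud : U.card + m ≤ d
            · have hUV : U ⊆ V := hU.trans hSV
              have hinj : ((𝒲.filter (fun W => W.card = m)).filter
                    (fun W => (U ∪ W).card ≤ d ∧ ¬ Light (U ∪ W))).card
                  ≤ ((V.powersetCard (U.card + m)).filter (fun T => U ⊆ T ∧ ¬ Light T)).card := by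
                apply Finset.card_le_card_of_injOn (fun W => U ∪ W)
                · intro W hWm'
                  rw [Finset.mem_coe, Finset.mem_filter, Finset.mem_filter] at hWm'
                  obtain ⟨⟨hW𝒲, hWcard⟩, hUd', hUL'⟩ := hWm'
                  have hdUW := hdisjUW W hW𝒲
                  have hWV : W ⊆ V := by
                    rw [h𝒲def, Finset.mem_filter, Finset.mem_powerset] at hW𝒲
                    exact hW𝒲.1
                  rw [Finset.mem_coe, Finset.mem_filter, Finset.mem_powersetCard]
                  refine ⟨⟨Finset.union_subset hUV hWV, ?_⟩, Finset.subset_union_left, hUL'⟩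
                  rw [Finset.card_union_of_disjoint hdUW, hWcard]
                · intro W1 h1 W2 h2 heq
                  simp only [Finset.coe_filter, Set.mem_setOf_eq] at h1 h2
                  have d1 := hdisjUW W1 (Finset.mem_filter.mp h1.1).1
                  have d2 := hdisjUW W2 (Finset.mem_filter.mp h2.1).1
                  have e1 : (U ∪ W1) \ U = W1 := by
                    rw [Finset.union_sdiff_cancel_left d1]
                  have e2 : (U ∪ W2) \ U = W2 := by
                    rw [Finset.union_sdiff_cancel_left d2]
                  have heq' : U ∪ W1 = U ∪ W2 := heq
                  rw [← e1, ← e2, heq']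
              have hextU := hext U hUV (hSl U hU) m hm.1 hud
              have hUj : U.card ≤ j := Finset.card_le_card hU
              have h2m : 2 * m ≤ (t - j) + 1 := by omega
              have hstep := my_choose_add_le (t - j) m h2m (j - U.card)
              rw [show t - j + (j - U.card) = t - U.card by omega] at hstep
              have hstepR : (((t - U.card).choose m : ℕ) : ℝ)
                  ≤ 2^k * (((t - j).choose m : ℕ) : ℝ) := by
                have h2jk : ((2:ℝ))^(j - U.card) ≤ 2^k := by
                  apply pow_le_pow_right₀ (by norm_num)
                  omega
                have hcast : (((t - U.card).choose m : ℕ) : ℝ)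
                    ≤ (2:ℝ)^(j - U.card) * (((t - j).choose m : ℕ) : ℝ) := by
                  have := hstep
                  push_cast
                  exact_mod_cast this
                calc (((t - U.card).choose m : ℕ) : ℝ)
                    ≤ (2:ℝ)^(j - U.card) * (((t - j).choose m : ℕ) : ℝ) := hcast
                  _ ≤ 2^k * (((t - j).choose m : ℕ) : ℝ) :=
                      mul_le_mul_of_nonneg_right h2jk (Nat.cast_nonneg _)
              calc ((((𝒲.filter (fun W => W.card = m)).filter
                      (fun W => (U ∪ W).card ≤ d ∧ ¬ Light (U ∪ W))).card : ℝ))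
                  ≤ (((V.powersetCard (U.card + m)).filter
                      (fun T => U ⊆ T ∧ ¬ Light T)).card : ℝ) := by exact_mod_cast hinj
                _ ≤ β * (((t - U.card).choose m : ℕ) : ℝ) := hextU
                _ ≤ β * (2^k * (((t - j).choose m : ℕ) : ℝ)) :=
                    mul_le_mul_of_nonneg_left hstepR hβpos.le
            · have hempty : (𝒲.filter (fun W => W.card = m)).filter
                  (fun W => (U ∪ W).card ≤ d ∧ ¬ Light (U ∪ W)) = ∅ := by
                rw [Finset.filter_eq_empty_iff]
                intro W hWm'
                rw [Finset.mem_filter] at hWm'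
                have hdUW := hdisjUW W hWm'.1
                rintro ⟨hcard, -⟩
                rw [Finset.card_union_of_disjoint hdUW, hWm'.2] at hcard
                omega
              rw [hempty]
              simp only [Finset.card_empty, Nat.cast_zero]
              positivity
          have hcount : (((𝒲.filter (fun W => W.card = m)).card : ℝ))
              ≤ 2^k * (β * (2^k * (((t - j).choose m : ℕ) : ℝ))) := by
            have h1 : (𝒲.filter (fun W => W.card = m)).card
                ≤ ∑ U ∈ S.powerset, ((𝒲.filter (fun W => W.card = m)).filter
                    (fun W => (U ∪ W).card ≤ d ∧ ¬ Light (U ∪ W))).card :=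
              le_trans (Finset.card_le_card hsub3) (Finset.card_biUnion_le)
            have h2 : ((∑ U ∈ S.powerset, ((𝒲.filter (fun W => W.card = m)).filter
                  (fun W => (U ∪ W).card ≤ d ∧ ¬ Light (U ∪ W))).card : ℕ) : ℝ)
                ≤ (S.powerset.card : ℝ) * (β * (2^k * (((t - j).choose m : ℕ) : ℝ))) := by
              push_cast
              calc ∑ U ∈ S.powerset, (((𝒲.filter (fun W => W.card = m)).filter
                      (fun W => (U ∪ W).card ≤ d ∧ ¬ Light (U ∪ W))).card : ℝ)
                  ≤ ∑ _U ∈ S.powerset, β * (2^k * (((t - j).choose m : ℕ) : ℝ)) :=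
                    Finset.sum_le_sum hperU
                _ = (S.powerset.card : ℝ) * (β * (2^k * (((t - j).choose m : ℕ) : ℝ))) := by
                    rw [Finset.sum_const, nsmul_eq_mul]
            have h3 : ((S.powerset.card : ℕ) : ℝ) ≤ 2^k := by
              rw [Finset.card_powerset]
              have : (2:ℕ)^j ≤ 2^k := Nat.pow_le_pow_right (by norm_num) (by omega)
              calc ((2^j : ℕ) : ℝ) ≤ ((2^k : ℕ) : ℝ) := by exact_mod_cast this
                _ = 2^k := by push_cast; ring
            calc (((𝒲.filter (fun W => W.card = m)).card : ℝ))
                ≤ ((∑ U ∈ S.powerset, ((𝒲.filter (fun W => W.card = m)).filter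
                    (fun W => (U ∪ W).card ≤ d ∧ ¬ Light (U ∪ W))).card : ℕ) : ℝ) := by
                  exact_mod_cast h1
              _ ≤ (S.powerset.card : ℝ) * (β * (2^k * (((t - j).choose m : ℕ) : ℝ))) := h2
              _ ≤ 2^k * (β * (2^k * (((t - j).choose m : ℕ) : ℝ))) := by
                  apply mul_le_mul_of_nonneg_right h3 (by positivity)
          -- binomial product identity
          have hprod : (((t - j).choose m : ℕ) : ℝ) * (((t - (j + m)).choose (k - (j + m)) : ℕ) : ℝ)
              ≤ (((t - j).choose (k - j) : ℕ) : ℝ) * 2^k := by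
            have htr := my_choose_trin (t - j) m (k - j) (by omega)
            rw [show t - j - m = t - (j + m) by omega, show k - j - m = k - (j + m) by omega] at htr
            have h2 : (k - j).choose m ≤ 2^k :=
              le_trans (my_choose_le_two_pow _ _) (Nat.pow_le_pow_right (by norm_num) (by omega))
            have hcast : (((t - j).choose m : ℕ) : ℝ) * (((t - (j + m)).choose (k - (j + m)) : ℕ) : ℝ)
                = (((t - j).choose (k - j) : ℕ) : ℝ) * (((k - j).choose m : ℕ) : ℝ) := by
              exact_mod_cast congrArg (Nat.cast (R := ℝ)) htr
            rw [hcast]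
            apply mul_le_mul_of_nonneg_left _ (Nat.cast_nonneg _)
            calc (((k - j).choose m : ℕ) : ℝ) ≤ ((2^k : ℕ) : ℝ) := by exact_mod_cast h2
              _ = 2^k := by push_cast; ring
          calc (((𝒲.filter (fun W => W.card = m)).card : ℝ))
                  * (((t - (j + m)).choose (k - (j + m)) : ℕ) : ℝ)
              ≤ (2^k * (β * (2^k * (((t - j).choose m : ℕ) : ℝ))))
                  * (((t - (j + m)).choose (k - (j + m)) : ℕ) : ℝ) :=
                mul_le_mul_of_nonneg_right hcount (Nat.cast_nonneg _)
            _ = (2^k * 2^k * β) * ((((t - j).choose m : ℕ) : ℝ)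
                  * (((t - (j + m)).choose (k - (j + m)) : ℕ) : ℝ)) := by ring
            _ ≤ (2^k * 2^k * β) * ((((t - j).choose (k - j) : ℕ) : ℝ) * 2^k) := by
                apply mul_le_mul_of_nonneg_left hprod (by positivity)
            _ = (2^k * 2^k * 2^k) * β * (((t - j).choose (k - j) : ℕ) : ℝ) := by ring
            _ = 8^k * β * (((t - j).choose (k - j) : ℕ) : ℝ) := by
                rw [show (2:ℝ)^k * 2^k * 2^k = 8^k by rw [← mul_pow, ← mul_pow]; norm_num]
        · -- fiber empty since j + m > k
          have hempty : 𝒲.filter (fun W => W.card = m) = ∅ := by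
            rw [Finset.filter_eq_empty_iff]
            intro W hWm'
            rw [h𝒲def, Finset.mem_filter] at hWm'
            obtain ⟨-, -, hWk, -⟩ := hWm'
            intro hWcard
            omega
          rw [hempty]
          simp only [Finset.card_empty, Nat.cast_zero, zero_mul]
          positivity
      -- assemble the heavy bound
      have hchain1 : HeavyE.card ≤ ∑ W ∈ 𝒲, (t - (j + W.card)).choose (k - (j + W.card)) := by
        calc HeavyE.card ≤ (𝒲.biUnion (fun W => E.filter (fun e => S ∪ W ⊆ e))).card :=
            Finset.card_le_card hHsub
          _ ≤ ∑ W ∈ 𝒲, (E.filter (fun e => S ∪ W ⊆ e)).card := Finset.card_biUnion_le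
          _ ≤ ∑ W ∈ 𝒲, (t - (j + W.card)).choose (k - (j + W.card)) := Finset.sum_le_sum hperW
      have hchain2 : ∑ W ∈ 𝒲, (t - (j + W.card)).choose (k - (j + W.card))
          = ∑ m ∈ Finset.Icc 1 d, ∑ W ∈ 𝒲.filter (fun W => W.card = m),
              (t - (j + W.card)).choose (k - (j + W.card)) :=
        (Finset.sum_fiberwise_of_maps_to hmaps _).symm
      have hchain3 : ((∑ m ∈ Finset.Icc 1 d, ∑ W ∈ 𝒲.filter (fun W => W.card = m),
            (t - (j + W.card)).choose (k - (j + W.card)) : ℕ) : ℝ)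
          ≤ (d : ℝ) * (8^k * β * (((t - j).choose (k - j) : ℕ) : ℝ)) := by
        push_cast
        calc ∑ m ∈ Finset.Icc 1 d, ∑ W ∈ 𝒲.filter (fun W => W.card = m),
              (((t - (j + W.card)).choose (k - (j + W.card)) : ℕ) : ℝ)
            ≤ ∑ m ∈ Finset.Icc 1 d, 8^k * β * (((t - j).choose (k - j) : ℕ) : ℝ) := by
              apply Finset.sum_le_sum
              intro m hm
              have hconst : ∑ W ∈ 𝒲.filter (fun W => W.card = m),
                  (((t - (j + W.card)).choose (k - (j + W.card)) : ℕ) : ℝ)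
                  = (((𝒲.filter (fun W => W.card = m)).card : ℝ))
                      * (((t - (j + m)).choose (k - (j + m)) : ℕ) : ℝ) := by
                rw [Finset.sum_congr rfl (fun W hWm' => by
                  rw [(Finset.mem_filter.mp hWm').2]), Finset.sum_const, nsmul_eq_mul]
              rw [hconst]
              exact hfiber m hm
          _ = (d : ℝ) * (8^k * β * (((t - j).choose (k - j) : ℕ) : ℝ)) := by
              rw [Finset.sum_const, nsmul_eq_mul, Nat.card_Icc]
              norm_num
      calc (HeavyE.card : ℝ)
          ≤ ((∑ m ∈ Finset.Icc 1 d, ∑ W ∈ 𝒲.filter (fun W => W.card = m),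
            (t - (j + W.card)).choose (k - (j + W.card)) : ℕ) : ℝ) := by
            exact_mod_cast hchain2 ▸ hchain1
        _ ≤ (d : ℝ) * (8^k * β * (((t - j).choose (k - j) : ℕ) : ℝ)) := hchain3
        _ = C1 * β * (((t - j).choose (k - j) : ℕ) : ℝ) := by rw [hC1]; ring
    -- put everything together
    have hfinal : β * (((t - j).choose (k - j) : ℕ) : ℝ)
        + C1 * β * (((t - j).choose (k - j) : ℕ) : ℝ)
        ≤ a * (((t - j).choose (k - j) : ℕ) : ℝ) := by
      have h1 : (1 + C1) * β ≤ a := by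
        have h2 : (1 + C1) * β ≤ Kc * β :=
          mul_le_mul_of_nonneg_right (by linarith [hKcC1]) hβpos.le
        have h3 : Kc * β = a := by
          rw [hβdef]
          field_simp
        linarith
      calc β * (((t - j).choose (k - j) : ℕ) : ℝ)
          + C1 * β * (((t - j).choose (k - j) : ℕ) : ℝ)
          = ((1 + C1) * β) * (((t - j).choose (k - j) : ℕ) : ℝ) := by ring
        _ ≤ a * (((t - j).choose (k - j) : ℕ) : ℝ) := mul_le_mul_of_nonneg_right h1 hCkj
    have hcast := hsplit
    have : ((E.filter (fun e => S ⊆ e)).card : ℝ)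
        ≤ ((E'.filter (fun e => S ⊆ e)).card : ℝ)
          + (((I.filter (fun e => S ⊆ e)).card : ℝ) + (HeavyE.card : ℝ)) := by
      exact_mod_cast hcast
    linarith [hIpart, hHeavy, hfinal]
  -- degree lower bound in E'
  have hdegE' : ∀ S, S ⊆ V → S.card ≤ d → (∀ T, T ⊆ S → Light T) →
      (δ - a) * (((t - S.card).choose (k - S.card) : ℕ) : ℝ)
        ≤ ((E'.filter fun e => S ⊆ e).card : ℝ) := by
    intro S h1 h2 h3
    have hlo := hdeglow S h1 h2
    have hls := hloss S h1 h2 h3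
    have hC : (0:ℝ) ≤ (((t - S.card).choose (k - S.card) : ℕ) : ℝ) := Nat.cast_nonneg _
    nlinarith
  have hshadowmem : ∀ S, S ⊆ V → S.card ≤ d → (∀ T, T ⊆ S → Light T) →
      S ∈ shadow S.card E' := by
    intro S h1 h2 h3
    have hdd := hdegE' S h1 h2 h3
    have hjt : S.card ≤ t := le_trans (Finset.card_le_card h1) (le_of_eq hV)
    have hCpos : (0:ℝ) < (((t - S.card).choose (k - S.card) : ℕ) : ℝ) := by
      exact_mod_cast Nat.choose_pos (by omega)
    have hδa : 0 < δ - a := by linarith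
    have hpos : 0 < ((E'.filter fun e => S ⊆ e).card : ℝ) :=
      lt_of_lt_of_le (by positivity) hdd
    have hne : (E'.filter fun e => S ⊆ e).Nonempty := by
      rw [← Finset.card_pos]
      exact_mod_cast hpos
    obtain ⟨e, he⟩ := hne
    rw [Finset.mem_filter] at he
    exact Finset.mem_biUnion.mpr ⟨e, he.1, Finset.mem_powersetCard.mpr ⟨he.2, rfl⟩⟩
  -- conclusion
  refine ⟨E', Finset.filter_subset _ _, fun e he => (Finset.mem_filter.mp he).2.1, ?_⟩
  intro j hj1 hjd
  refine ⟨?_, ?_, ?_⟩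
  · -- (P1)
    intro S hS
    obtain ⟨e, heE', hSpow⟩ := Finset.mem_biUnion.mp hS
    rw [Finset.mem_powersetCard] at hSpow
    obtain ⟨hSe, hScard⟩ := hSpow
    have heE : e ∈ E := Finset.mem_of_mem_filter e heE'
    have hSV : S ⊆ V := hSe.trans (hE e heE).1
    have hlights : ∀ T, T ⊆ S → Light T := fun T hT =>
      hsub_light e heE' T (hT.trans hSe) (by
        have := Finset.card_le_card hT
        omega)
    have hfin := hdegE' S hSV (by omega) hlights
    rw [hScard] at hfin
    rw [hV]
    exact hfin
  · -- (P2)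
    have hsubbad : (V.powersetCard j).filter (fun S => S ∉ shadow j E')
        ⊆ (Finset.Icc 1 j).biUnion (fun j' =>
            ((V.powersetCard j').filter (fun T => ¬ Light T)).biUnion
              (fun T => (V.powersetCard j).filter (fun S => T ⊆ S))) := by
      intro S hS
      rw [Finset.mem_filter, Finset.mem_powersetCard] at hS
      obtain ⟨⟨hSV, hScard⟩, hSbad⟩ := hS
      have hex : ∃ T, T ⊆ S ∧ ¬ Light T := by
        by_contra h
        push_neg at h
        refine hSbad ?_
        have := hshadowmem S hSV (by omega) h
        rwa [hScard] at this
      obtain ⟨T, hTS, hTheavy⟩ := hex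
      have hTne : T.Nonempty := by
        rcases Finset.eq_empty_or_nonempty T with h | h
        · exact absurd (h ▸ hlightempty) (h ▸ hTheavy)
        · exact h
      refine Finset.mem_biUnion.mpr ⟨T.card, Finset.mem_Icc.mpr
        ⟨Finset.card_pos.mpr hTne, hScard ▸ Finset.card_le_card hTS⟩,
        Finset.mem_biUnion.mpr ⟨T, Finset.mem_filter.mpr
          ⟨Finset.mem_powersetCard.mpr ⟨hTS.trans hSV, rfl⟩, hTheavy⟩,
          Finset.mem_filter.mpr ⟨Finset.mem_powersetCard.mpr ⟨hSV, hScard⟩, hTS⟩⟩⟩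
    have hheavycount : ∀ j' ∈ Finset.Icc 1 j,
        ((((V.powersetCard j').filter (fun T => ¬ Light T)).card : ℝ))
          ≤ (ε / θ j') * ((t.choose j' : ℕ) : ℝ) := by
      intro j' hj'
      rw [Finset.mem_Icc] at hj'
      have hj'k : (∅ : Finset B).card + j' ≤ k := by simp; omega
      have hIl : ((I.filter (fun e => (∅ : Finset B) ⊆ e)).card : ℝ)
          ≤ ε * (((t - (∅ : Finset B).card).choose (k - (∅ : Finset B).card) : ℕ) : ℝ) := by
        simp only [Finset.card_empty, Nat.sub_zero]
        exact hIdeg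
      have key := my_heavy_ext V I t k hV hIV hkt ∅ j' hj'.1 hj'k ε (θ j') (hθpos _) hIl
        ((V.powersetCard j').filter (fun T => ¬ Light T))
        (fun T hT => by
          rw [Finset.mem_filter, Finset.mem_powersetCard] at hT
          exact ⟨hT.1.1, by simp [hT.1.2], Finset.empty_subset T⟩)
        (fun T hT => by
          rw [Finset.mem_filter, Finset.mem_powersetCard] at hT
          have hneg := hT.2
          simp only [hLightdef] at hneg
          rw [hT.1.2] at hneg
          have h0 : (∅ : Finset B).card + j' = j' := by simp
          rw [h0]
          exact not_lt.1 hneg)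
      simpa using key
    have hcount : ((((V.powersetCard j).filter (fun S => S ∉ shadow j E')).card : ℝ))
        ≤ ∑ j' ∈ Finset.Icc 1 j,
            ((((V.powersetCard j').filter (fun T => ¬ Light T)).card : ℝ))
              * (((t - j').choose (j - j') : ℕ) : ℝ) := by
      have h1 : ((V.powersetCard j).filter (fun S => S ∉ shadow j E')).card
          ≤ ∑ j' ∈ Finset.Icc 1 j,
              ∑ T ∈ (V.powersetCard j').filter (fun T => ¬ Light T),
                ((V.powersetCard j).filter (fun S => T ⊆ S)).card := by
        calc ((V.powersetCard j).filter (fun S => S ∉ shadow j E')).card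
            ≤ _ := Finset.card_le_card hsubbad
          _ ≤ ∑ j' ∈ Finset.Icc 1 j, (((V.powersetCard j').filter (fun T => ¬ Light T)).biUnion
              (fun T => (V.powersetCard j).filter (fun S => T ⊆ S))).card := Finset.card_biUnion_le
          _ ≤ _ := Finset.sum_le_sum (fun j' _ => Finset.card_biUnion_le)
      have h2 : ∀ j' ∈ Finset.Icc 1 j, ∀ T ∈ (V.powersetCard j').filter (fun T => ¬ Light T),
          ((V.powersetCard j).filter (fun S => T ⊆ S)).card = (t - j').choose (j - j') := by
        intro j' hj' T hT
        rw [Finset.mem_Icc] at hj'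
        rw [Finset.mem_filter, Finset.mem_powersetCard] at hT
        rw [my_card_filter_superset V T hT.1.1 (by omega : T.card ≤ j), hV, hT.1.2]
      calc ((((V.powersetCard j).filter (fun S => S ∉ shadow j E')).card : ℝ))
          ≤ ((∑ j' ∈ Finset.Icc 1 j,
              ∑ T ∈ (V.powersetCard j').filter (fun T => ¬ Light T),
                ((V.powersetCard j).filter (fun S => T ⊆ S)).card : ℕ) : ℝ) := by
            exact_mod_cast h1
        _ = ∑ j' ∈ Finset.Icc 1 j,
              ((((V.powersetCard j').filter (fun T => ¬ Light T)).card : ℝ))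
                * (((t - j').choose (j - j') : ℕ) : ℝ) := by
            push_cast
            apply Finset.sum_congr rfl
            intro j' hj'
            rw [Finset.sum_congr rfl (fun T hT => by
              rw [h2 j' hj' T hT]), Finset.sum_const, nsmul_eq_mul]
    have hperj' : ∀ j' ∈ Finset.Icc 1 j,
        ((((V.powersetCard j').filter (fun T => ¬ Light T)).card : ℝ))
          * (((t - j').choose (j - j') : ℕ) : ℝ)
        ≤ (ε / θ 0) * (((t.choose j : ℕ) : ℝ) * ((j.choose j' : ℕ) : ℝ)) := by
      intro j' hj'
      have hmI := Finset.mem_Icc.mp hj'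
      have htr := my_choose_trin t j' j (by omega)
      have htrR : ((t.choose j' : ℕ) : ℝ) * (((t - j').choose (j - j') : ℕ) : ℝ)
          = ((t.choose j : ℕ) : ℝ) * ((j.choose j' : ℕ) : ℝ) := by
        exact_mod_cast congrArg (Nat.cast (R := ℝ)) htr
      have hdivle : ε / θ j' ≤ ε / θ 0 :=
        div_le_div_of_nonneg_left hε.le (hθpos 0) (hθ0le j')
      calc ((((V.powersetCard j').filter (fun T => ¬ Light T)).card : ℝ))
            * (((t - j').choose (j - j') : ℕ) : ℝ)
          ≤ ((ε / θ j') * ((t.choose j' : ℕ) : ℝ)) * (((t - j').choose (j - j') : ℕ) : ℝ) :=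
            mul_le_mul_of_nonneg_right (hheavycount j' hj') (Nat.cast_nonneg _)
        _ = (ε / θ j') * (((t.choose j' : ℕ) : ℝ) * (((t - j').choose (j - j') : ℕ) : ℝ)) := by
            ring
        _ ≤ (ε / θ 0) * (((t.choose j' : ℕ) : ℝ) * (((t - j').choose (j - j') : ℕ) : ℝ)) :=
            mul_le_mul_of_nonneg_right hdivle (by positivity)
        _ = (ε / θ 0) * (((t.choose j : ℕ) : ℝ) * ((j.choose j' : ℕ) : ℝ)) := by rw [htrR]
    have hsumchoose : ∑ j' ∈ Finset.Icc 1 j, ((j.choose j' : ℕ) : ℝ) ≤ 2^j := by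
      have h1 : ∑ j' ∈ Finset.Icc 1 j, j.choose j' ≤ ∑ j' ∈ Finset.range (j+1), j.choose j' := by
        apply Finset.sum_le_sum_of_subset
        intro x hx
        rw [Finset.mem_Icc] at hx
        rw [Finset.mem_range]
        omega
      rw [Nat.sum_range_choose] at h1
      calc ∑ j' ∈ Finset.Icc 1 j, ((j.choose j' : ℕ) : ℝ)
          = ((∑ j' ∈ Finset.Icc 1 j, j.choose j' : ℕ) : ℝ) := by push_cast; ring
        _ ≤ ((2^j : ℕ) : ℝ) := by exact_mod_cast h1
        _ = 2^j := by push_cast; ring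
    have hεθ : ε / θ 0 ≤ a / 2^(k+2) := by
      rw [div_le_div_iff₀ (hθpos 0) (by positivity)]
      have : ε ≤ a * θ 0 / 2 ^ (k + 2) := hεε
      rw [le_div_iff₀ (by positivity : (0:ℝ) < 2^(k+2))] at this
      linarith
    rw [hV]
    calc ((((V.powersetCard j).filter (fun S => S ∉ shadow j E')).card : ℝ))
        ≤ ∑ j' ∈ Finset.Icc 1 j,
            ((((V.powersetCard j').filter (fun T => ¬ Light T)).card : ℝ))
              * (((t - j').choose (j - j') : ℕ) : ℝ) := hcount
      _ ≤ ∑ j' ∈ Finset.Icc 1 j,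
            (ε / θ 0) * (((t.choose j : ℕ) : ℝ) * ((j.choose j' : ℕ) : ℝ)) :=
          Finset.sum_le_sum hperj'
      _ = (ε / θ 0) * ((t.choose j : ℕ) : ℝ) * (∑ j' ∈ Finset.Icc 1 j, ((j.choose j' : ℕ) : ℝ)) := by
          rw [Finset.mul_sum]
          apply Finset.sum_congr rfl
          intro j' _
          ring
      _ ≤ (ε / θ 0) * ((t.choose j : ℕ) : ℝ) * 2^j := by
          apply mul_le_mul_of_nonneg_left hsumchoose (by positivity)
      _ ≤ a * ((t.choose j : ℕ) : ℝ) := by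
          have h2j : (2:ℝ)^j ≤ 2^(k+2) := pow_le_pow_right₀ (by norm_num) (by omega)
          have hcs : (0:ℝ) ≤ ((t.choose j : ℕ) : ℝ) := Nat.cast_nonneg _
          have h4 : (0:ℝ) < 2^(k+2) := by positivity
          calc (ε / θ 0) * ((t.choose j : ℕ) : ℝ) * 2^j
              ≤ (a / 2^(k+2)) * ((t.choose j : ℕ) : ℝ) * 2^(k+2) := by
                apply mul_le_mul
                · exact mul_le_mul_of_nonneg_right hεθ hcs
                · exact h2j
                · positivity
                · positivity
            _ = a * ((t.choose j : ℕ) : ℝ) := by field_simp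
  · -- (P3)
    intro T hT
    have hTfacts : T.card = j - 1 ∧ T ⊆ V ∧ (∀ U, U ⊆ T → Light U) := by
      rcases hT with hT | ⟨hj1', hTe⟩
      · obtain ⟨e, heE', hTpow⟩ := Finset.mem_biUnion.mp hT
        rw [Finset.mem_powersetCard] at hTpow
        refine ⟨hTpow.2, hTpow.1.trans (hE e (Finset.mem_of_mem_filter e heE')).1, ?_⟩
        intro U hU
        apply hsub_light e heE' U (hU.trans hTpow.1)
        have h1 := Finset.card_le_card hU
        omega
      · subst hTe
        refine ⟨by simp [hj1'], Finset.empty_subset V, ?_⟩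
        intro U hU
        rw [Finset.subset_empty] at hU
        subst hU
        exact hlightempty
    obtain ⟨hTcard, hTV, hTlight⟩ := hTfacts
    set Vb := V.filter (fun v => v ∉ T ∧ ∃ U, U ⊆ T ∧ ¬ Light (insert v U)) with hVbdef
    have himg : (V.powersetCard j).filter (fun S => T ⊆ S ∧ S ∉ shadow j E')
        ⊆ Vb.image (fun v => insert v T) := by
      intro S hS
      rw [Finset.mem_filter, Finset.mem_powersetCard] at hS
      obtain ⟨⟨hSV, hScard⟩, hTS, hSbad⟩ := hS
      have hsd : (S \ T).card = 1 := by
        rw [Finset.card_sdiff_of_subset hTS, hScard, hTcard]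
        omega
      obtain ⟨v, hv⟩ := Finset.card_eq_one.mp hsd
      have hvS : v ∈ S := (Finset.mem_sdiff.mp (hv ▸ Finset.mem_singleton_self v)).1
      have hvT : v ∉ T := (Finset.mem_sdiff.mp (hv ▸ Finset.mem_singleton_self v)).2
      have hSeq : S = insert v T := by
        have h1 : T ∪ S \ T = S := Finset.union_sdiff_of_subset hTS
        rw [hv] at h1
        rw [← h1]
        ext x
        simp [or_comm]
      have hex : ∃ T', T' ⊆ S ∧ ¬ Light T' := by
        by_contra h
        push_neg at h
        refine hSbad ?_
        have := hshadowmem S hSV (by omega) h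
        rwa [hScard] at this
      obtain ⟨T', hT'S, hT'h⟩ := hex
      have hvT' : v ∈ T' := by
        by_contra hvn
        have hsubT : T' ⊆ T := by
          intro x hx
          have hx2 := hT'S hx
          rw [hSeq, Finset.mem_insert] at hx2
          rcases hx2 with h | h
          · exact absurd (h ▸ hx) hvn
          · exact h
        exact hT'h (hTlight T' hsubT)
      refine Finset.mem_image.mpr ⟨v, ?_, hSeq.symm⟩
      rw [hVbdef, Finset.mem_filter]
      refine ⟨hSV hvS, hvT, T'.erase v, ?_, ?_⟩
      · intro x hx
        rw [Finset.mem_erase] at hx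
        have hx2 := hT'S hx.2
        rw [hSeq, Finset.mem_insert] at hx2
        tauto
      · rwa [Finset.insert_erase hvT']
    have hVbsub : Vb ⊆ T.powerset.biUnion
        (fun U => V.filter (fun v => v ∉ U ∧ ¬ Light (insert v U))) := by
      intro v hv
      rw [hVbdef, Finset.mem_filter] at hv
      obtain ⟨hvV, hvT, U, hUT, hUL⟩ := hv
      exact Finset.mem_biUnion.mpr ⟨U, Finset.mem_powerset.mpr hUT,
        Finset.mem_filter.mpr ⟨hvV, fun h => hvT (hUT h), hUL⟩⟩
    have hperU : ∀ U ∈ T.powerset,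
        ((V.filter (fun v => v ∉ U ∧ ¬ Light (insert v U))).card : ℝ) ≤ β * t := by
      intro U hU
      rw [Finset.mem_powerset] at hU
      have hUV : U ⊆ V := hU.trans hTV
      have hUd : U.card + 1 ≤ d := by
        have := Finset.card_le_card hU
        omega
      have hinj : (V.filter (fun v => v ∉ U ∧ ¬ Light (insert v U))).card
          ≤ ((V.powersetCard (U.card + 1)).filter (fun T' => U ⊆ T' ∧ ¬ Light T')).card := by
        apply Finset.card_le_card_of_injOn (fun v => insert v U)
        · intro v hv
          rw [Finset.mem_coe, Finset.mem_filter] at hv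
          rw [Finset.mem_coe, Finset.mem_filter, Finset.mem_powersetCard]
          exact ⟨⟨Finset.insert_subset hv.1 hUV, Finset.card_insert_of_notMem hv.2.1⟩,
            Finset.subset_insert _ _, hv.2.2⟩
        · intro v1 h1 v2 h2 heq
          simp only [Finset.coe_filter, Set.mem_setOf_eq] at h1 h2
          have heq' : insert v1 U = insert v2 U := heq
          have hv1 : v1 ∈ insert v2 U := heq' ▸ Finset.mem_insert_self v1 U
          rw [Finset.mem_insert] at hv1
          rcases hv1 with h | h
          · exact h
          · exact absurd h h1.2.1
      have hextv := hext U hUV (hTlight U hU) 1 le_rfl hUd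
      calc ((V.filter (fun v => v ∉ U ∧ ¬ Light (insert v U))).card : ℝ)
          ≤ (((V.powersetCard (U.card + 1)).filter
              (fun T' => U ⊆ T' ∧ ¬ Light T')).card : ℝ) := by exact_mod_cast hinj
        _ ≤ β * (((t - U.card).choose 1 : ℕ) : ℝ) := hextv
        _ ≤ β * t := by
            rw [Nat.choose_one_right]
            apply mul_le_mul_of_nonneg_left _ hβpos.le
            exact_mod_cast Nat.sub_le t U.card
    have htotal : ((((V.powersetCard j).filter
          (fun S => T ⊆ S ∧ S ∉ shadow j E')).card : ℝ)) ≤ 2^k * (β * t) := by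
      have h1 : ((V.powersetCard j).filter (fun S => T ⊆ S ∧ S ∉ shadow j E')).card
          ≤ ∑ U ∈ T.powerset, (V.filter (fun v => v ∉ U ∧ ¬ Light (insert v U))).card := by
        calc ((V.powersetCard j).filter (fun S => T ⊆ S ∧ S ∉ shadow j E')).card
            ≤ (Vb.image (fun v => insert v T)).card := Finset.card_le_card himg
          _ ≤ Vb.card := Finset.card_image_le
          _ ≤ (T.powerset.biUnion
              (fun U => V.filter (fun v => v ∉ U ∧ ¬ Light (insert v U)))).card :=
            Finset.card_le_card hVbsub
          _ ≤ _ := Finset.card_biUnion_le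
      have h2 : ((∑ U ∈ T.powerset,
            (V.filter (fun v => v ∉ U ∧ ¬ Light (insert v U))).card : ℕ) : ℝ)
          ≤ (T.powerset.card : ℝ) * (β * t) := by
        push_cast
        calc ∑ U ∈ T.powerset, ((V.filter (fun v => v ∉ U ∧ ¬ Light (insert v U))).card : ℝ)
            ≤ ∑ _U ∈ T.powerset, β * t := Finset.sum_le_sum hperU
          _ = (T.powerset.card : ℝ) * (β * t) := by rw [Finset.sum_const, nsmul_eq_mul]
      have h3 : ((T.powerset.card : ℕ) : ℝ) ≤ 2^k := by
        rw [Finset.card_powerset, hTcard]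
        have : (2:ℕ)^(j-1) ≤ 2^k := Nat.pow_le_pow_right (by norm_num) (by omega)
        calc (((2:ℕ)^(j-1) : ℕ) : ℝ) ≤ (((2:ℕ)^k : ℕ) : ℝ) := by exact_mod_cast this
          _ = 2^k := by push_cast; ring
      calc ((((V.powersetCard j).filter (fun S => T ⊆ S ∧ S ∉ shadow j E')).card : ℝ))
          ≤ ((∑ U ∈ T.powerset,
              (V.filter (fun v => v ∉ U ∧ ¬ Light (insert v U))).card : ℕ) : ℝ) := by
            exact_mod_cast h1
        _ ≤ (T.powerset.card : ℝ) * (β * t) := h2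
        _ ≤ 2^k * (β * t) := mul_le_mul_of_nonneg_right h3 (by positivity)
    rw [hV]
    have hβA : 2^k * β ≤ a / 2 := by
      have h1 : 2^k * β = (2^k * a) / Kc := by rw [hβdef]; ring
      rw [h1, div_le_div_iff₀ hKcpos (by norm_num : (0:ℝ) < 2)]
      nlinarith [hKc2, ha, pow_succ (2:ℝ) k]
    have htR : (8:ℝ) * (k + d + 2) ≤ (t:ℝ) := by exact_mod_cast ht
    have hjR : (j:ℝ) ≤ (d:ℝ) := by exact_mod_cast hjd
    have htpos : (0:ℝ) < t := by
      have : (0:ℕ) < t := by omega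
      exact_mod_cast this
    calc ((((V.powersetCard j).filter (fun S => T ⊆ S ∧ S ∉ shadow j E')).card : ℝ))
        ≤ 2^k * (β * t) := htotal
      _ = (2^k * β) * t := by ring
      _ ≤ (a / 2) * t := mul_le_mul_of_nonneg_right hβA htpos.le
      _ < a * ((t:ℝ) - j + 1) := by nlinarith
end

section
/- (Lifting b-fractional matchings from vertex links.) Let k ≥ 2, let H be a k-graph and let b : V(H) → [0,1] be a vertex weighting. Suppose there exists a real m with m ≤ (Σ_{v ∈ V(H)} b(v))/k such that for every vertex v of H, the link graph L({v}) has a b-fractional matching of size at least m. Then H itself has a b-fractional matching of size at least m. -/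
open Finset

variable {A : Type*} [DecidableEq A]

/-- lifting `b`-fractional matchings from vertex links. -/
theorem lift_b_fractional_matching {B : Type*} [DecidableEq B] (k : ℕ) (hk : 2 ≤ k)
    (V : Finset B) (E : Finset (Finset B)) (hE : ∀ e ∈ E, e ⊆ V ∧ e.card = k)
    (b : B → ℝ) (hb : ∀ v ∈ V, 0 ≤ b v ∧ b v ≤ 1) (m : ℝ)
    (hm : m ≤ (∑ v ∈ V, b v) / (k : ℝ))
    (hlink : ∀ v ∈ V, HasBFracMatching V (link {v} E) b m) :
    HasBFracMatching V E b m := by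
  classical
  by_cases hm0 : m ≤ 0
  · refine ⟨fun _ => 0, fun e _ => by norm_num, fun v hv => ?_, by simpa using hm0⟩
    simpa using (hb v hv).1
  push_neg at hm0
  have hk0 : (0:ℝ) < (k:ℝ) := by positivity
  -- the load of a vertex under an edge-weighting
  set load : B → (↥E → ℝ) → ℝ :=
    fun u w => ∑ e ∈ univ.filter (fun e : ↥E => u ∈ (e : Finset B)), w e with hloaddef
  -- the feasible polytope
  set K : Set (↥E → ℝ) :=
    {w | (∀ e, w e ∈ Set.Icc (0:ℝ) 1) ∧ ∀ u ∈ V, load u w ≤ b u} with hKdef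
  have hloadcont : ∀ u : B, Continuous fun w : ↥E → ℝ => load u w := by
    intro u
    simp only [hloaddef]
    exact continuous_finset_sum _ fun e _ => continuous_apply e
  have hKeq : K = (Set.pi Set.univ fun _ : ↥E => Set.Icc (0:ℝ) 1) ∩
      ⋂ u ∈ V, {w : ↥E → ℝ | load u w ≤ b u} := by
    ext w
    simp only [hKdef, Set.mem_setOf_eq, Set.mem_inter_iff, Set.mem_pi, Set.mem_univ,
      forall_true_left, Set.mem_iInter]
  have hKcomp : IsCompact K := by
    rw [hKeq]
    exact (isCompact_univ_pi fun _ => isCompact_Icc).inter_right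
      (isClosed_biInter fun u _ => isClosed_le (hloadcont u) continuous_const)
  have h0K : (fun _ => (0:ℝ)) ∈ K := by
    constructor
    · intro e; exact ⟨le_refl _, by norm_num⟩
    · intro u hu
      simp only [hloaddef, Finset.sum_const_zero]
      exact (hb u hu).1
  have hcontsize : Continuous fun w : ↥E → ℝ => ∑ e : ↥E, w e :=
    continuous_finset_sum _ fun e _ => continuous_apply e
  obtain ⟨ws, hwsK, hmax⟩ :=
    hKcomp.exists_isMaxOn ⟨_, h0K⟩ hcontsize.continuousOn
  set S : ℝ := ∑ e : ↥E, ws e with hSdef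
  -- it suffices to show m ≤ S
  by_cases hSm : m ≤ S
  · refine ⟨fun e => if h : e ∈ E then ws ⟨e, h⟩ else 0, ?_, ?_, ?_⟩
    · intro e he
      simp only [dif_pos he]
      exact ⟨(hwsK.1 ⟨e, he⟩).1, (hwsK.1 ⟨e, he⟩).2⟩
    · intro v hv
      have hlv := hwsK.2 v hv
      have heq : ∑ e ∈ E.filter (fun e' => v ∈ e'),
          (if h : e ∈ E then ws ⟨e, h⟩ else 0) = load v ws := by
        rw [Finset.sum_filter,
          ← Finset.sum_attach E (fun e => if v ∈ e then (if h : e ∈ E then ws ⟨e, h⟩ else 0) else 0)]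
        simp only [hloaddef, Finset.sum_filter, Finset.univ_eq_attach]
        exact Finset.sum_congr rfl fun e _ => by rw [dif_pos e.2]
      rw [heq]; exact hlv
    · have heq : ∑ e ∈ E, (if h : e ∈ E then ws ⟨e, h⟩ else 0) = S := by
        rw [← Finset.sum_attach E (fun e => if h : e ∈ E then ws ⟨e, h⟩ else 0)]
        simp only [hSdef, Finset.univ_eq_attach]
        exact Finset.sum_congr rfl fun e _ => by rw [dif_pos e.2]
      rw [heq]; exact hSm
  push_neg at hSm
  exfalso
  -- total load equals k * S
  have hsumload : ∑ u ∈ V, load u ws = (k:ℝ) * S := by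
    simp only [hloaddef, Finset.sum_filter]
    rw [Finset.sum_comm]
    have : ∀ e : ↥E, ∑ u ∈ V, (if u ∈ (e : Finset B) then ws e else 0) = (k:ℝ) * ws e := by
      intro e
      rw [← Finset.sum_filter]
      have hfe : V.filter (fun u => u ∈ (e : Finset B)) = (e : Finset B) := by
        ext x
        simp only [Finset.mem_filter, and_iff_right_iff_imp]
        exact fun hx => (hE e e.2).1 hx
      rw [hfe, Finset.sum_const, (hE e e.2).2, nsmul_eq_mul]
    rw [Finset.sum_congr rfl fun e _ => this e, ← Finset.mul_sum]
  -- there is a vertex with slack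
  have hkm : (k:ℝ) * m ≤ ∑ v ∈ V, b v := by
    rw [le_div_iff₀ hk0] at hm
    linarith
  obtain ⟨v₀, hv₀, hslack⟩ : ∃ v₀ ∈ V, load v₀ ws < b v₀ := by
    by_contra hcon
    push_neg at hcon
    have h1 : ∑ u ∈ V, b u ≤ ∑ u ∈ V, load u ws := Finset.sum_le_sum hcon
    rw [hsumload] at h1
    nlinarith
  -- the link matching at v₀
  obtain ⟨w', hw'1, hw'2, hw'3⟩ := hlink v₀ hv₀
  set L : Finset (Finset B) := link {v₀} E with hLdef
  have hLim : L = (E.filter fun e => {v₀} ⊆ e).image fun e => e \ {v₀} := rfl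
  have hinj : ∀ e₁ ∈ E.filter (fun e => {v₀} ⊆ e), ∀ e₂ ∈ E.filter (fun e => {v₀} ⊆ e),
      e₁ \ {v₀} = e₂ \ {v₀} → e₁ = e₂ := by
    intro e₁ h₁ e₂ h₂ h
    have m₁ : v₀ ∈ e₁ := Finset.singleton_subset_iff.1 (Finset.mem_filter.1 h₁).2
    have m₂ : v₀ ∈ e₂ := Finset.singleton_subset_iff.1 (Finset.mem_filter.1 h₂).2
    have he₁ : insert v₀ (e₁ \ {v₀}) = e₁ := by
      rw [Finset.sdiff_singleton_eq_erase]; exact Finset.insert_erase m₁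
    have he₂ : insert v₀ (e₂ \ {v₀}) = e₂ := by
      rw [Finset.sdiff_singleton_eq_erase]; exact Finset.insert_erase m₂
    rw [← he₁, ← he₂, h]
  have htrans : ∀ g : Finset B → ℝ,
      ∑ f ∈ L, g f = ∑ e ∈ E.filter (fun e => {v₀} ⊆ e), g (e \ {v₀}) := by
    intro g
    rw [hLim]
    exact Finset.sum_image hinj
  set S₀ : ℝ := ∑ f ∈ L, w' f with hS₀def
  have hS₀m : m ≤ S₀ := hw'3
  -- the lifted link matching
  set wh : ↥E → ℝ :=
    fun e => if v₀ ∈ (e : Finset B) then w' ((e : Finset B) \ {v₀}) else 0 with hwhdef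
  have hwhmem : ∀ e : ↥E, v₀ ∈ (e : Finset B) → (e : Finset B) \ {v₀} ∈ L := by
    intro e he
    rw [hLim]
    exact Finset.mem_image_of_mem _
      (Finset.mem_filter.2 ⟨e.2, Finset.singleton_subset_iff.2 he⟩)
  have hwhIcc : ∀ e : ↥E, wh e ∈ Set.Icc (0:ℝ) 1 := by
    intro e
    simp only [hwhdef]
    split_ifs with h
    · exact ⟨(hw'1 _ (hwhmem e h)).1, (hw'1 _ (hwhmem e h)).2⟩
    · exact ⟨le_refl _, by norm_num⟩
  have hwhsize : ∑ e : ↥E, wh e = S₀ := by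
    have h1 : ∑ e : ↥E, wh e
        = ∑ e ∈ E, (if v₀ ∈ e then w' (e \ {v₀}) else 0) := by
      rw [← Finset.sum_attach E (fun e => if v₀ ∈ e then w' (e \ {v₀}) else 0)]
      simp only [hwhdef, Finset.univ_eq_attach]
    rw [h1, ← Finset.sum_filter]
    have h2 : E.filter (fun e => v₀ ∈ e) = E.filter (fun e => {v₀} ⊆ e) := by
      apply Finset.filter_congr
      intro e _
      simp [Finset.singleton_subset_iff]
    rw [h2, hS₀def, htrans]
  have hwhload : ∀ u ∈ V, u ≠ v₀ → load u wh ≤ b u := by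
    intro u hu hne
    have h1 : load u wh = ∑ e ∈ E, (if v₀ ∈ e then (if u ∈ e \ {v₀} then w' (e \ {v₀}) else 0) else 0) := by
      simp only [hloaddef, Finset.sum_filter]
      rw [← Finset.sum_attach E
        (fun e => if v₀ ∈ e then (if u ∈ e \ {v₀} then w' (e \ {v₀}) else 0) else 0)]
      simp only [hwhdef, Finset.univ_eq_attach]
      refine Finset.sum_congr rfl fun e _ => ?_
      by_cases h1 : u ∈ (e : Finset B) <;> by_cases h2 : v₀ ∈ (e : Finset B) <;>
        simp [h1, h2, Finset.mem_sdiff, hne]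
    rw [h1, ← Finset.sum_filter]
    have h2 : E.filter (fun e => v₀ ∈ e) = E.filter (fun e => {v₀} ⊆ e) := by
      apply Finset.filter_congr
      intro e _
      simp [Finset.singleton_subset_iff]
    rw [h2, ← htrans (fun f => if u ∈ f then w' f else 0), ← Finset.sum_filter]
    exact hw'2 u hu
  have hwhloadv₀ : load v₀ wh ≤ S₀ := by
    rw [← hwhsize]
    simp only [hloaddef]
    refine Finset.sum_le_sum_of_subset_of_nonneg (Finset.filter_subset _ _) ?_
    intro e _ _
    exact (hwhIcc e).1
  -- the improving combination
  set ℓ : ℝ := load v₀ ws with hldef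
  have hd : 0 < b v₀ - ℓ := by linarith
  set s : ℝ := max (S₀ - ℓ) (b v₀ - ℓ) with hsdef
  have hs : 0 < s := lt_of_lt_of_le hd (le_max_right _ _)
  set θ : ℝ := (b v₀ - ℓ) / s with hθdef
  have hθ0 : 0 < θ := div_pos hd hs
  have hθ1 : θ ≤ 1 := by
    rw [hθdef, div_le_one hs]
    exact le_max_right _ _
  have hθs : θ * s = b v₀ - ℓ := by
    rw [hθdef]
    field_simp
  have hθsmax : θ * (S₀ - ℓ) ≤ b v₀ - ℓ := by
    calc θ * (S₀ - ℓ) ≤ θ * s := by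
          exact mul_le_mul_of_nonneg_left (le_max_left _ _) hθ0.le
      _ = b v₀ - ℓ := hθs
  set w2 : ↥E → ℝ := fun e => (1 - θ) * ws e + θ * wh e with hw2def
  have hloadlin : ∀ u : B, load u w2 = (1 - θ) * load u ws + θ * load u wh := by
    intro u
    simp only [hloaddef, hw2def, Finset.sum_add_distrib, Finset.mul_sum]
  have hw2K : w2 ∈ K := by
    constructor
    · intro e
      have ha := hwsK.1 e
      have hc := hwhIcc e
      constructor
      · simp only [hw2def]
        have := ha.1; have := hc.1
        nlinarith
      · simp only [hw2def]
        have := ha.2; have := hc.2; have := ha.1; have := hc.1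
        nlinarith
    · intro u hu
      rw [hloadlin u]
      by_cases huv : u = v₀
      · subst huv
        have h1 : (1 - θ) * load u ws + θ * load u wh
            ≤ (1 - θ) * ℓ + θ * S₀ := by
          have := mul_le_mul_of_nonneg_left hwhloadv₀ hθ0.le
          rw [← hldef]
          linarith
        have h2 : (1 - θ) * ℓ + θ * S₀ = ℓ + θ * (S₀ - ℓ) := by ring
        linarith
      · have h1 : load u ws ≤ b u := hwsK.2 u hu
        have h2 : load u wh ≤ b u := hwhload u hu huv
        nlinarith
  have hsize2 : ∑ e : ↥E, w2 e = (1 - θ) * S + θ * S₀ := by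
    simp only [hw2def, Finset.sum_add_distrib, ← Finset.mul_sum, hSdef, hwhsize]
  have hgt : S < ∑ e : ↥E, w2 e := by
    rw [hsize2]
    nlinarith
  have := isMaxOn_iff.1 hmax w2 hw2K
  simp only [hSdef] at hgt
  linarith
end

section
/- (From d-links to vertex links.) Let 1 ≤ d ≤ k−1. There exists c > 0 depending only on k such that for all 0 < α ≤ c, 0 < γ ≤ c and all δ > 0 the following holds. Let H be a k-graph on t vertices with α-perturbed minimum relative d-degree at least δ. Suppose that for every edge S of ∂_d(H) the link graph L(S) contains a fractional matching of size at least (1/k + γ)·t. Then for every vertex v contained in some edge of H (i.e., every edge {v} of ∂_1(H)), the link graph L({v}) contains a fractional matching of size at least (1/k + γ)·t. -/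
open Finset

variable {A : Type*} [DecidableEq A]

set_option maxHeartbeats 1000000

lemma double_count (V : Finset A) (G : Finset (Finset A)) (w : Finset A → ℝ)
    (hG : ∀ f ∈ G, f ⊆ V) :
    ∑ v ∈ V, ∑ f ∈ G.filter (fun f => v ∈ f), w f = ∑ f ∈ G, (f.card : ℝ) * w f := by
  calc ∑ v ∈ V, ∑ f ∈ G.filter (fun f => v ∈ f), w f
      = ∑ v ∈ V, ∑ f ∈ G, if v ∈ f then w f else 0 := by
        exact Finset.sum_congr rfl fun v _ => (Finset.sum_filter _ _)
    _ = ∑ f ∈ G, ∑ v ∈ V, if v ∈ f then w f else 0 := Finset.sum_comm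
    _ = ∑ f ∈ G, (f.card : ℝ) * w f := by
        refine Finset.sum_congr rfl fun f hf => ?_
        rw [Finset.sum_ite_mem, Finset.inter_eq_right.mpr (hG f hf), Finset.sum_const,
          nsmul_eq_mul]

lemma link_link (u : A) (S : Finset A) (hu : u ∉ S) (E : Finset (Finset A)) :
    link {u} (link S E) = link (insert u S) E := by
  ext X
  simp only [link, Finset.mem_image, Finset.mem_filter, Finset.singleton_subset_iff]
  constructor
  · rintro ⟨Y, ⟨⟨e, ⟨he, hSe⟩, rfl⟩, hue⟩, rfl⟩
    rw [Finset.mem_sdiff] at hue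
    refine ⟨e, ⟨he, Finset.insert_subset hue.1 hSe⟩, ?_⟩
    ext z; simp only [Finset.mem_sdiff, Finset.mem_insert, Finset.mem_singleton]; tauto
  · rintro ⟨e, ⟨he, hie⟩, rfl⟩
    rw [Finset.insert_subset_iff] at hie
    refine ⟨e \ S, ⟨⟨e, ⟨he, hie.2⟩, rfl⟩, Finset.mem_sdiff.mpr ⟨hie.1, hu⟩⟩, ?_⟩
    ext z; simp only [Finset.mem_sdiff, Finset.mem_insert, Finset.mem_singleton]; tauto

lemma mem_shadow_iff {j : ℕ} {E : Finset (Finset A)} {S : Finset A} :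
    S ∈ _root_.shadow j E ↔ ∃ e ∈ E, S ⊆ e ∧ S.card = j := by
  simp [_root_.shadow, Finset.mem_powersetCard]

-- size bound: matching in r-uniform on vertex set W has size ≤ |W|/r
lemma matching_size_bound (W : Finset A) (L : Finset (Finset A)) (r : ℕ) (m : ℝ)
    (hL : ∀ X ∈ L, X ⊆ W ∧ X.card = r) (h : HasFracMatching L m) :
    m * r ≤ (W.card : ℝ) := by
  obtain ⟨w, hw1, hw2, hw3⟩ := h
  have hdc := double_count W L w (fun f hf => (hL f hf).1)
  have h1 : ∑ f ∈ L, (f.card : ℝ) * w f = (∑ f ∈ L, w f) * r := by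
    rw [Finset.sum_mul]
    exact Finset.sum_congr rfl fun f hf => by rw [(hL f hf).2, mul_comm]
  have h2 : ∑ v ∈ W, ∑ f ∈ L.filter (fun f => v ∈ f), w f ≤ (W.card : ℝ) := by
    calc ∑ v ∈ W, ∑ f ∈ L.filter (fun f => v ∈ f), w f ≤ ∑ _v ∈ W, (1:ℝ) :=
          Finset.sum_le_sum fun v _ => hw2 v
      _ = (W.card : ℝ) := by simp
  have hr0 : (0:ℝ) ≤ r := by positivity
  nlinarith [hw3]

lemma core (V : Finset A) (G : Finset (Finset A)) (r : ℕ) (m : ℝ)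
    (hr : 1 ≤ r) (hm : 1 ≤ m)
    (hG : ∀ f ∈ G, f ⊆ V ∧ f.card = r)
    (Aset : Finset A) (hAV : Aset ⊆ V)
    (hA : ∀ u ∈ Aset, HasFracMatching (link {u} G) m)
    (hcard : (r : ℝ) * m ≤ (Aset.card : ℝ)) :
    HasFracMatching G m := by
  classical
  set K : Set (Finset A → ℝ) :=
    (Set.univ.pi fun f => if f ∈ G then Set.Icc (0:ℝ) 1 else {0}) ∩
      (⋂ v : A, {w | ∑ f ∈ G.filter (fun f => v ∈ f), w f ≤ 1}) with hKdef
  have hKmem : ∀ w : Finset A → ℝ, w ∈ K ↔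
      ((∀ f ∈ G, 0 ≤ w f ∧ w f ≤ 1) ∧ (∀ f ∉ G, w f = 0)) ∧
        ∀ v : A, ∑ f ∈ G.filter (fun f => v ∈ f), w f ≤ 1 := by
    intro w
    rw [hKdef, Set.mem_inter_iff, Set.mem_univ_pi]
    constructor
    · rintro ⟨h1, h2⟩
      refine ⟨⟨fun f hf => ?_, fun f hf => ?_⟩, fun v => ?_⟩
      · have := h1 f; rw [if_pos hf] at this; exact this
      · have := h1 f; rw [if_neg hf] at this; exact this
      · exact Set.mem_iInter.mp h2 v
    · rintro ⟨⟨h1, h2⟩, h3⟩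
      refine ⟨fun f => ?_, Set.mem_iInter.mpr h3⟩
      by_cases hf : f ∈ G
      · rw [if_pos hf]; exact h1 f hf
      · rw [if_neg hf]; exact h2 f hf
  have hKc : IsCompact K := by
    apply IsCompact.inter_right
    · exact isCompact_univ_pi fun f => by
        split_ifs with h
        exacts [isCompact_Icc, isCompact_singleton]
    · exact isClosed_iInter fun v =>
        isClosed_le (continuous_finset_sum _ fun f _ => continuous_apply f) continuous_const
  have h0K : (0 : Finset A → ℝ) ∈ K := by
    rw [hKmem]
    refine ⟨⟨fun f _ => by norm_num, fun f _ => rfl⟩, fun v => by simp⟩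
  obtain ⟨w, hwK, hwmax⟩ := hKc.exists_isMaxOn ⟨0, h0K⟩
    ((continuous_finset_sum G fun f _ => continuous_apply f).continuousOn)
  obtain ⟨⟨hwb, hw0⟩, hwload⟩ := (hKmem w).mp hwK
  set s : ℝ := ∑ f ∈ G, w f with hs
  -- suffices m ≤ s
  suffices hms : m ≤ s by exact ⟨w, hwb, hwload, hms⟩
  by_contra hns
  push_neg at hns
  -- find a vertex of Aset with load < 1
  have hwnn : ∀ f, 0 ≤ w f := by
    intro f; by_cases hf : f ∈ G
    · exact (hwb f hf).1
    · rw [hw0 f hf]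
  have hdc : ∑ v ∈ V, ∑ f ∈ G.filter (fun f => v ∈ f), w f = (r:ℝ) * s := by
    rw [double_count V G w (fun f hf => (hG f hf).1), hs, Finset.mul_sum]
    exact Finset.sum_congr rfl fun f hf => by rw [(hG f hf).2]
  have hr0 : (0:ℝ) < r := by exact_mod_cast hr
  have hEx : ∃ u ∈ Aset, ∑ f ∈ G.filter (fun f => u ∈ f), w f < 1 := by
    by_contra hc
    push_neg at hc
    have h1 : (Aset.card : ℝ) ≤ ∑ u ∈ Aset, ∑ f ∈ G.filter (fun f => u ∈ f), w f := by
      calc (Aset.card:ℝ) = ∑ _u ∈ Aset, (1:ℝ) := by simp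
        _ ≤ _ := Finset.sum_le_sum fun u hu => hc u hu
    have h2 : ∑ u ∈ Aset, ∑ f ∈ G.filter (fun f => u ∈ f), w f
        ≤ ∑ v ∈ V, ∑ f ∈ G.filter (fun f => v ∈ f), w f :=
      Finset.sum_le_sum_of_subset_of_nonneg hAV fun v _ _ =>
        Finset.sum_nonneg fun f _ => hwnn f
    rw [hdc] at h2
    nlinarith
  obtain ⟨u, huA, hload⟩ := hEx
  obtain ⟨wu, hu1, hu2, hu3⟩ := hA u huA
  set L := link {u} G with hL
  set M : ℝ := ∑ X ∈ L, wu X with hM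
  have hmM : m ≤ M := hu3
  have hM0 : 0 < M := lt_of_lt_of_le (by linarith) hmM
  have hdivle : m / M ≤ 1 := (div_le_one hM0).mpr hmM
  have hdivnn : 0 ≤ m / M := by positivity
  -- the filter description of L
  have hLdef : L = (G.filter fun f => u ∈ f).image fun f => f \ {u} := by
    rw [hL]; unfold link
    congr 1
    ext f
    simp [Finset.singleton_subset_iff]
  have hinj : ∀ f1 ∈ G.filter (fun f => u ∈ f), ∀ f2 ∈ G.filter (fun f => u ∈ f),
      f1 \ {u} = f2 \ {u} → f1 = f2 := by
    intro f1 h1 f2 h2 h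
    rw [Finset.mem_filter] at h1 h2
    ext z
    by_cases hz : z = u
    · subst hz; simp [h1.2, h2.2]
    · have h' := Finset.ext_iff.mp h z
      simp only [Finset.mem_sdiff, Finset.mem_singleton] at h'
      constructor
      · intro hmem; exact (h'.mp ⟨hmem, hz⟩).1
      · intro hmem; exact (h'.mpr ⟨hmem, hz⟩).1
  have himg : ∀ g : Finset A → ℝ,
      ∑ f ∈ G.filter (fun f => u ∈ f), g (f \ {u}) = ∑ X ∈ L, g X := by
    intro g
    rw [hLdef, Finset.sum_image hinj]
  -- define augmentation p
  set p : Finset A → ℝ := fun f => if f ∈ G ∧ u ∈ f then (m/M) * wu (f \ {u}) else 0 with hp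
  have hmemL : ∀ f ∈ G, u ∈ f → f \ {u} ∈ L := by
    intro f hf huf
    rw [hLdef]
    exact Finset.mem_image_of_mem _ (Finset.mem_filter.mpr ⟨hf, huf⟩)
  have hpb : ∀ f, 0 ≤ p f ∧ p f ≤ 1 := by
    intro f
    rw [hp]
    dsimp only
    split_ifs with h
    · have hXL := hmemL f h.1 h.2
      obtain ⟨hb1, hb2⟩ := hu1 _ hXL
      constructor
      · positivity
      · exact mul_le_one₀ hdivle hb1 hb2
    · norm_num
  have hpG : ∀ f ∉ G, p f = 0 := by
    intro f hf; rw [hp]; dsimp only; rw [if_neg (by tauto)]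
  -- total of p is exactly m
  have hptot : ∑ f ∈ G, p f = m := by
    have : ∑ f ∈ G, p f = ∑ f ∈ G.filter (fun f => u ∈ f), (m/M) * wu (f \ {u}) := by
      rw [Finset.sum_filter]
      refine Finset.sum_congr rfl fun f hf => ?_
      rw [hp]; dsimp only
      by_cases huf : u ∈ f
      · rw [if_pos ⟨hf, huf⟩, if_pos huf]
      · rw [if_neg (by tauto), if_neg huf]
    rw [this, ← Finset.mul_sum, himg (fun X => wu X), ← hM]
    field_simp
  -- load of p at u is at most m
  have hpu : ∑ f ∈ G.filter (fun f => u ∈ f), p f ≤ m := by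
    rw [← hptot]
    exact Finset.sum_le_sum_of_subset_of_nonneg (Finset.filter_subset _ _)
      (fun f _ _ => (hpb f).1)
  -- load of p at v ≠ u is at most 1
  have hpv : ∀ v : A, v ≠ u → ∑ f ∈ G.filter (fun f => v ∈ f), p f ≤ 1 := by
    intro v hv
    have h1 : ∑ f ∈ G.filter (fun f => v ∈ f), p f
        = (m/M) * ∑ f ∈ G.filter (fun f => v ∈ f ∧ u ∈ f), wu (f \ {u}) := by
      rw [Finset.mul_sum, ← Finset.filter_filter, Finset.sum_filter (fun f => u ∈ f)]
      refine Finset.sum_congr rfl fun f hf => ?_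
      rw [Finset.mem_filter] at hf
      rw [hp]; dsimp only
      by_cases huf : u ∈ f
      · rw [if_pos ⟨hf.1, huf⟩, if_pos huf]
      · rw [if_neg (by tauto), if_neg huf]
    have hsub : ((G.filter fun f => v ∈ f ∧ u ∈ f).image fun f => f \ {u})
        ⊆ L.filter (fun X => v ∈ X) := by
      intro X hX
      rw [Finset.mem_image] at hX
      obtain ⟨f, hf, rfl⟩ := hX
      rw [Finset.mem_filter] at hf ⊢
      exact ⟨hmemL f hf.1 hf.2.2, Finset.mem_sdiff.mpr ⟨hf.2.1, by simpa using hv⟩⟩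
    have hinj2 : ∀ f1 ∈ G.filter (fun f => v ∈ f ∧ u ∈ f),
        ∀ f2 ∈ G.filter (fun f => v ∈ f ∧ u ∈ f), f1 \ {u} = f2 \ {u} → f1 = f2 := by
      intro f1 h1 f2 h2 h
      rw [Finset.mem_filter] at h1 h2
      exact hinj f1 (Finset.mem_filter.mpr ⟨h1.1, h1.2.2⟩)
        f2 (Finset.mem_filter.mpr ⟨h2.1, h2.2.2⟩) h
    have h2 : ∑ f ∈ G.filter (fun f => v ∈ f ∧ u ∈ f), wu (f \ {u})
        ≤ ∑ X ∈ L.filter (fun X => v ∈ X), wu X := by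
      rw [← Finset.sum_image hinj2]
      refine Finset.sum_le_sum_of_subset_of_nonneg hsub fun X hX _ =>
        (hu1 X (Finset.mem_of_mem_filter X hX)).1
    calc ∑ f ∈ G.filter (fun f => v ∈ f), p f
        = (m/M) * ∑ f ∈ G.filter (fun f => v ∈ f ∧ u ∈ f), wu (f \ {u}) := h1
      _ ≤ (m/M) * ∑ X ∈ L.filter (fun X => v ∈ X), wu X := by
          apply mul_le_mul_of_nonneg_left h2 hdivnn
      _ ≤ (m/M) * 1 := mul_le_mul_of_nonneg_left (hu2 v) hdivnn
      _ ≤ 1 := by rw [mul_one]; exact hdivle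
  -- augment
  set θ : ℝ := 1 - ∑ f ∈ G.filter (fun f => u ∈ f), w f with hθ
  have hθ0 : 0 < θ := by rw [hθ]; linarith
  have hθ1 : θ ≤ 1 := by
    rw [hθ]
    have : 0 ≤ ∑ f ∈ G.filter (fun f => u ∈ f), w f :=
      Finset.sum_nonneg fun f _ => hwnn f
    linarith
  set ε : ℝ := θ / m with hε
  have hm0 : (0:ℝ) < m := by linarith
  have hε0 : 0 < ε := by positivity
  have hε1 : ε ≤ 1 := by
    rw [hε, div_le_one hm0]; linarith
  set w' : Finset A → ℝ := fun f => (1 - ε) * w f + ε * p f with hw'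
  have hw'K : w' ∈ K := by
    rw [hKmem]
    refine ⟨⟨fun f hf => ?_, fun f hf => ?_⟩, fun v => ?_⟩
    · obtain ⟨hb1, hb2⟩ := hwb f hf
      obtain ⟨hc1, hc2⟩ := hpb f
      constructor
      · rw [hw']; dsimp only; nlinarith
      · rw [hw']; dsimp only; nlinarith
    · rw [hw']; dsimp only; rw [hw0 f hf, hpG f hf]; ring
    · have hlin : ∑ f ∈ G.filter (fun f => v ∈ f), w' f
          = (1-ε) * (∑ f ∈ G.filter (fun f => v ∈ f), w f)
            + ε * (∑ f ∈ G.filter (fun f => v ∈ f), p f) := by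
        rw [Finset.mul_sum, Finset.mul_sum, ← Finset.sum_add_distrib]
      rw [hlin]
      by_cases hv : v = u
      · subst hv
        have := hpu
        have h2 : (1-ε) * (∑ f ∈ G.filter (fun f => v ∈ f), w f) = (1-ε)*(1-θ) := by
          rw [hθ]; ring_nf
        have hpnn : 0 ≤ ∑ f ∈ G.filter (fun f => v ∈ f), p f :=
          Finset.sum_nonneg fun f _ => (hpb f).1
        rw [h2]
        have : ε * (∑ f ∈ G.filter (fun f => v ∈ f), p f) ≤ ε * m :=
          mul_le_mul_of_nonneg_left hpu (le_of_lt hε0)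
        have hεm : ε * m = θ := by rw [hε]; field_simp
        nlinarith
      · have h1 := hwload v
        have h2 := hpv v hv
        have hwv : 0 ≤ ∑ f ∈ G.filter (fun f => v ∈ f), w f :=
          Finset.sum_nonneg fun f _ => hwnn f
        nlinarith
  -- contradiction with maximality
  have hgain : ∑ f ∈ G, w' f = (1-ε) * s + ε * m := by
    rw [hw']; dsimp only
    rw [Finset.sum_add_distrib, ← Finset.mul_sum, ← Finset.mul_sum, hptot, hs]
  have hcontra := hwmax hw'K
  simp only [Set.mem_setOf_eq] at hcontra
  rw [hgain, ← hs] at hcontra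
  nlinarith




lemma arith_key (K T J aa g : ℝ) (hK : 2 ≤ K) (hT : K + 1 ≤ T) (hJ1 : 1 ≤ J)
    (hJK : J ≤ K - 2) (ha0 : 0 < aa) (hg0 : 0 < g)
    (ha : 4 * aa * K^4 ≤ 1) (hg : 4 * g * K^4 ≤ 1) :
    (K - J) * ((1/K + g) * T) ≤ (1 - aa) * (T - J) := by
  have hK0 : (0:ℝ) < K := by linarith
  have hT0 : (0:ℝ) < T := by linarith
  rw [← sub_nonneg]
  have key : (1 - aa) * (T - J) - (K - J) * ((1/K + g) * T)
      = (J * (T - K) - aa * K * (T - J) - g * K * (K - J) * T) / K := by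
    field_simp
    ring
  rw [key]
  apply div_nonneg _ (le_of_lt hK0)
  set X := aa * K * (T - J) with hX
  set Y := g * K * (K - J) * T with hY
  have hX4 : 4 * K^3 * X ≤ T := by
    have h1 : X ≤ aa * K * T := by
      rw [hX]
      have : 0 < aa * K := by positivity
      nlinarith
    nlinarith [mul_pos hK0 (mul_pos hK0 hK0)]
  have hY4 : 4 * K^2 * Y ≤ T := by
    have h1 : Y ≤ g * K^2 * T := by
      rw [hY]
      nlinarith [mul_pos hg0 hK0, mul_pos (mul_pos hg0 hK0) hT0]
    nlinarith [mul_pos hK0 hK0]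
  have hY5 : 4 * K^3 * Y ≤ K * T := by nlinarith [hY4]
  have hu : (0:ℝ) ≤ T - K - 1 := by linarith
  have hc1 : (0:ℝ) ≤ 4*K^3 - (K+1)^2 := by nlinarith [sq_nonneg K, sq_nonneg (K-2), mul_nonneg (by linarith : (0:ℝ) ≤ K - 2) (sq_nonneg K)]
  have hc2 : (0:ℝ) ≤ 4*K^3 - K - 1 := by nlinarith [mul_nonneg (by linarith : (0:ℝ) ≤ K - 2) (sq_nonneg K), sq_nonneg K]
  have h6 : T * (1 + K) ≤ 4 * K^3 * (T - K) := by nlinarith [mul_nonneg hu hc2, hc1]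
  have h7 : X + Y ≤ T - K := by nlinarith [mul_pos (mul_pos hK0 hK0) hK0]
  nlinarith [h7]

/-- from `d`-links to vertex links. -/
theorem links_from_d_to_one (k d : ℕ) (hk : 2 ≤ k) (hd : 1 ≤ d) (hdk : d ≤ k - 1) :
    ∃ c : ℝ, 0 < c ∧ ∀ a γ : ℝ, 0 < a → a ≤ c → 0 < γ → γ ≤ c → ∀ δ : ℝ, 0 < δ →
      ∀ (B : Type) [DecidableEq B], ∀ (V : Finset B) (E : Finset (Finset B)),
        (∀ e ∈ E, e ⊆ V ∧ e.card = k) →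
        PerturbedDegLB k d a δ V E →
        (∀ S ∈ shadow d E, HasFracMatching (link S E) ((1 / (k : ℝ) + γ) * (V.card : ℝ))) →
        ∀ S ∈ shadow 1 E, HasFracMatching (link S E) ((1 / (k : ℝ) + γ) * (V.card : ℝ)) := by
  have hk0 : (0:ℝ) < (k:ℝ) := by positivity
  refine ⟨1 / (4 * (k:ℝ)^4), by positivity, ?_⟩
  intro a γ ha hac hγ hγc δ hδ B _ V E hE hDeg hM
  set t := V.card with ht
  set m : ℝ := (1 / (k : ℝ) + γ) * (t : ℝ) with hmdef
  suffices H : ∀ n j, 1 ≤ j → j + n = d → ∀ S ∈ _root_.shadow j E, HasFracMatching (link S E) m by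
    intro S hS; exact H (d - 1) 1 le_rfl (by omega) S hS
  intro n
  induction n with
  | zero =>
    intro j hj1 hjd
    have hjeq : j = d := by omega
    subst hjeq
    exact hM
  | succ n ih =>
    intro j hj1 hjd S' hS'
    obtain ⟨e₀, he₀E, hS'e₀, hS'card⟩ := mem_shadow_iff.mp hS'
    obtain ⟨he₀V, he₀card⟩ := hE e₀ he₀E
    have hSV : S' ⊆ V := hS'e₀.trans he₀V
    have hjk : j ≤ k - 2 := by omega
    have hjd' : j + 1 ≤ d := by omega
    have hdk' : d ≤ k := by omega
    obtain ⟨Sd, hSde, hSdcard⟩ := Finset.exists_subset_card_eq (s := e₀) (n := d)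
      (by rw [he₀card]; omega)
    have hSdmem : Sd ∈ _root_.shadow d E := mem_shadow_iff.mpr ⟨e₀, he₀E, hSde, hSdcard⟩
    have hSdV : Sd ⊆ V := hSde.trans he₀V
    have hlinkSd : ∀ X ∈ link Sd E, X ⊆ V \ Sd ∧ X.card = k - d := by
      intro X hX
      simp only [link, Finset.mem_image, Finset.mem_filter] at hX
      obtain ⟨e, ⟨heE, hSe⟩, rfl⟩ := hX
      obtain ⟨heV, hecard⟩ := hE e heE
      constructor
      · intro z hz
        rw [Finset.mem_sdiff] at hz ⊢
        exact ⟨heV hz.1, hz.2⟩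
      · rw [Finset.card_sdiff_of_subset hSe, hecard, hSdcard]
    have hsize := matching_size_bound (V \ Sd) (link Sd E) (k - d) m hlinkSd (hM Sd hSdmem)
    have htk : k ≤ t := by
      calc k = e₀.card := he₀card.symm
        _ ≤ t := Finset.card_le_card he₀V
    have hkR : (2:ℝ) ≤ (k:ℝ) := by exact_mod_cast hk
    have hdR1 : (1:ℝ) ≤ (d:ℝ) := by exact_mod_cast hd
    have hdRk : (d:ℝ) ≤ (k:ℝ) - 1 := by
      have h1 : (d:ℝ) + 1 ≤ (k:ℝ) := by exact_mod_cast (by omega : d + 1 ≤ k)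
      linarith
    have htR : ((k:ℝ)) ≤ (t:ℝ) := by exact_mod_cast htk
    have hkd_cast : ((k - d : ℕ) : ℝ) = (k:ℝ) - (d:ℝ) := Nat.cast_sub hdk'
    have hcVSd : (((V \ Sd).card : ℕ) : ℝ) = (t:ℝ) - (d:ℝ) := by
      rw [Finset.card_sdiff_of_subset hSdV, hSdcard]
      exact Nat.cast_sub (le_trans (by omega) htk)
    rw [hcVSd, hkd_cast] at hsize
    have hq : (1/(k:ℝ)) * (k:ℝ) = 1 := one_div_mul_cancel (ne_of_gt hk0)
    have hkd1 : (1:ℝ) ≤ (k:ℝ) - (d:ℝ) := by linarith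
    have htk1R : (k:ℝ) + 1 ≤ (t:ℝ) := by
      have hklt : (k:ℝ) < (t:ℝ) := by
        by_contra hcon
        push_neg at hcon
        have hTK : (t:ℝ) = (k:ℝ) := le_antisymm hcon htR
        rw [hmdef, hTK] at hsize
        nlinarith [hsize, hq, mul_pos (mul_pos hγ hk0) (lt_of_lt_of_le one_pos hkd1)]
      have h2 : k < t := by exact_mod_cast hklt
      exact_mod_cast Nat.succ_le_of_lt h2
    have hjR1 : (1:ℝ) ≤ (j:ℝ) := by exact_mod_cast hj1
    have hjRk : (j:ℝ) ≤ (k:ℝ) - 2 := by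
      have h1 : (j:ℝ) + 2 ≤ (k:ℝ) := by exact_mod_cast (by omega : j + 2 ≤ k)
      linarith
    have ht0 : (0:ℝ) < (t:ℝ) := by linarith
    have hm1 : (1:ℝ) ≤ m := by
      rw [hmdef]
      nlinarith [hq, mul_pos hγ ht0,
        mul_nonneg (le_of_lt (one_div_pos.mpr hk0)) (sub_nonneg.mpr htR)]
    have hGedge : ∀ f ∈ link S' E, f ⊆ V ∧ f.card = k - j := by
      intro f hf
      simp only [link, Finset.mem_image, Finset.mem_filter] at hf
      obtain ⟨e, ⟨heE, hSe⟩, rfl⟩ := hf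
      obtain ⟨heV, hecard⟩ := hE e heE
      exact ⟨(Finset.sdiff_subset).trans heV,
        by rw [Finset.card_sdiff_of_subset hSe, hecard, hS'card]⟩
    set Aset := (V \ S').filter (fun u => insert u S' ∈ _root_.shadow (j+1) E) with hAdef
    have hAV : Aset ⊆ V := (Finset.filter_subset _ _).trans Finset.sdiff_subset
    have hA : ∀ u ∈ Aset, HasFracMatching (link {u} (link S' E)) m := by
      intro u hu
      rw [hAdef, Finset.mem_filter, Finset.mem_sdiff] at hu
      rw [link_link u S' hu.1.2 E]
      exact ih (j+1) (by omega) (by omega) _ hu.2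
    have hcard1 : (((V \ S').card : ℕ) : ℝ) = (t:ℝ) - (j:ℝ) := by
      rw [Finset.card_sdiff_of_subset hSV, hS'card]
      exact Nat.cast_sub (by omega : j ≤ t)
    set badf := (V \ S').filter (fun u => ¬ insert u S' ∈ _root_.shadow (j+1) E) with hbdef
    have hsplit : Aset.card + badf.card = (V \ S').card := by
      rw [hAdef, hbdef]
      exact Finset.card_filter_add_card_filter_not _
    set BadS := (V.powersetCard (j+1)).filter
      (fun S => S' ⊆ S ∧ S ∉ _root_.shadow (j+1) E) with hBdef
    have hinjbad : badf.card ≤ BadS.card := by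
      apply Finset.card_le_card_of_injOn (fun u => insert u S')
      · intro u hu
        simp only [hbdef, Finset.mem_coe, Finset.mem_filter, Finset.mem_sdiff] at hu
        rw [hBdef, Finset.mem_coe, Finset.mem_filter]
        refine ⟨Finset.mem_powersetCard.mpr ⟨Finset.insert_subset hu.1.1 hSV, ?_⟩,
          Finset.subset_insert _ _, hu.2⟩
        rw [Finset.card_insert_of_notMem hu.1.2, hS'card]
      · intro u1 h1 u2 h2 h
        simp only [Finset.mem_coe, hbdef, Finset.mem_filter, Finset.mem_sdiff] at h1 h2
        have hins : insert u1 S' = insert u2 S' := h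
        have h3 : u1 ∈ insert u2 S' := hins ▸ Finset.mem_insert_self u1 S'
        rcases Finset.mem_insert.mp h3 with h' | h'
        · exact h'
        · exact absurd h' h1.1.2
    have hP3 := ((hDeg (j+1) (by omega) hjd').2.2) S' (Or.inl (by simpa using hS'))
    have hBadR : (BadS.card : ℝ) < a * ((t:ℝ) - (j:ℝ)) := by
      have he : a * ((V.card : ℝ) - ((j+1 : ℕ) : ℝ) + 1) = a * ((t:ℝ) - (j:ℝ)) := by
        push_cast
        ring
      rw [← he]
      exact_mod_cast hP3
    have hAcard : (1 - a) * ((t:ℝ) - (j:ℝ)) ≤ (Aset.card : ℝ) := by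
      have h1 : (Aset.card : ℝ) = ((t:ℝ) - (j:ℝ)) - (badf.card : ℝ) := by
        rw [← hcard1, ← hsplit]
        push_cast
        ring
      have h2 : (badf.card : ℝ) ≤ (BadS.card : ℝ) := by exact_mod_cast hinjbad
      nlinarith
    have hkey : ((k - j : ℕ) : ℝ) * m ≤ (Aset.card : ℝ) := by
      have hkj_cast : ((k - j : ℕ) : ℝ) = (k:ℝ) - (j:ℝ) := Nat.cast_sub (by omega : j ≤ k)
      rw [hkj_cast, hmdef]
      refine le_trans ?_ hAcard
      apply arith_key (k:ℝ) (t:ℝ) (j:ℝ) a γ hkR htk1R hjR1 hjRk ha hγ ?_ ?_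
      · have h1 := (le_div_iff₀ (by positivity : (0:ℝ) < 4 * (k:ℝ)^4)).mp hac
        nlinarith [h1]
      · have h1 := (le_div_iff₀ (by positivity : (0:ℝ) < 4 * (k:ℝ)^4)).mp hγc
        nlinarith [h1]
    exact core V (link S' E) (k - j) m (by omega) hm1 hGedge Aset hAV hA hkey
end
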